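/- arXiv:2511.04363 — 4 statements merged into one kernel-verified Lean document; each statement's English description precedes it below -/
import Mathlib

section
/- For every a>0, ℓ>0 and θ₀∈ℝ, the curve t ↦ (r(t), v(t)) := (R(θ₀+at, a, ℓ), V(θ₀+at, a, ℓ)), defined for t∈ℝ, is continuously differentiable, satisfies r(t)>0, and solves the Kepler characteristic system: r'(t) = v(t) and v'(t) = ℓ/r(t)³ − m/(2r(t)²) for all t∈ℝ. Moreover the energy identity v(t)² − m/r(t) + ℓ/r(t)² = a² holds for all t∈ℝ. -/
noncomputable section

open Real MeasureTheory Set Filter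

/-- Japanese bracket `⟨x⟩ := √(2+x²)`. -/
def jb (x : ℝ) : ℝ := Real.sqrt (2 + x ^ 2)

/-- `κ(a,ℓ) := (1 + 4a²ℓ/m²)^{-1/2}`. -/
def kpa (m a ℓ : ℝ) : ℝ := 1 / Real.sqrt (1 + 4 * a ^ 2 * ℓ / m ^ 2)

/-- `p(a,ℓ) := m / (2a²κ(a,ℓ))`. -/
def pfn (m a ℓ : ℝ) : ℝ := m / (2 * a ^ 2 * kpa m a ℓ)

/-- `r₀(a,ℓ) := p(a,ℓ)(1-κ(a,ℓ))`. -/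
def rZero (m a ℓ : ℝ) : ℝ := pfn m a ℓ * (1 - kpa m a ℓ)

/-- `G_κ(y) := √(y²-1) - κ ln(y + √(y²-1))`. -/
def Gf (κ y : ℝ) : ℝ := Real.sqrt (y ^ 2 - 1) - κ * Real.log (y + Real.sqrt (y ^ 2 - 1))

/-- `H_κ : [0,∞) → [1,∞)`, the inverse of `G_κ` on `[1,∞)`. -/
def Hf (κ x : ℝ) : ℝ := Function.invFunOn (Gf κ) (Set.Ici 1) x

/-- Inverse hyperbolic cosine `arcosh x = ln (x + √(x²-1))`. -/
def acosh (x : ℝ) : ℝ := Real.log (x + Real.sqrt (x ^ 2 - 1))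

/-- The radial function `R(θ,a,ℓ)`. -/
def Rf (m θ a ℓ : ℝ) : ℝ :=
  pfn m a ℓ * Hf (kpa m a ℓ) (|θ| / pfn m a ℓ) - pfn m a ℓ * kpa m a ℓ

/-- The radial velocity `V(θ,a,ℓ)`. -/
def Vf (m θ a ℓ : ℝ) : ℝ :=
  Real.sign θ * a *
    Real.sqrt (1 + m / (a ^ 2 * Rf m θ a ℓ) - ℓ / (a ^ 2 * (Rf m θ a ℓ) ^ 2))

/-- The dynamical radial function `R̃(t,θ,a,ℓ) = R(θ+at,a,ℓ)`. -/
def Rtil (m t θ a ℓ : ℝ) : ℝ := Rf m (θ + a * t) a ℓ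

/-- The action `𝒜(r,v,ℓ) = √(v² - m/r + ℓ/r²)`. -/
def Acal (m r v ℓ : ℝ) : ℝ := Real.sqrt (v ^ 2 - m / r + ℓ / r ^ 2)

/-- The angle `Θ(r,v,ℓ) = sgn(v)·p(𝒜,ℓ)·G_{κ(𝒜,ℓ)}(r/p(𝒜,ℓ) + κ(𝒜,ℓ))`. -/
def Theta (m r v ℓ : ℝ) : ℝ :=
  Real.sign v * pfn m (Acal m r v ℓ) ℓ *
    Gf (kpa m (Acal m r v ℓ) ℓ) (r / pfn m (Acal m r v ℓ) ℓ + kpa m (Acal m r v ℓ) ℓ)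

/-- The phase space `ℝ×(0,∞)×(0,∞)` in the variables `(θ,a,ℓ)`. -/
def phaseSet : Set (ℝ × ℝ × ℝ) := Set.univ ×ˢ Set.Ioi 0 ×ˢ Set.Ioi 0

/-- The gravitational field
`F(t,r) = -(1/r²)·∫∫∫ 1_{R(θ+ta,a,ℓ) ≤ r} γ(θ,a,ℓ)² dθ da dℓ`. -/
def gravF (m : ℝ) (γ : ℝ × ℝ × ℝ → ℝ) (t r : ℝ) : ℝ :=
  -(1 / r ^ 2) *
    (∫⁻ x in {x : ℝ × ℝ × ℝ | Rf m (x.1 + t * x.2.1) x.2.1 x.2.2 ≤ r},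
        ENNReal.ofReal ((γ x) ^ 2) ∂(volume.restrict phaseSet)).toReal

/-- The effective gravitational field
`F_eff(t,r) = -(1/r²)·∫∫∫ 1_{at ≤ r} γ(θ,a,ℓ)² dθ da dℓ`. -/
def gravFeff (γ : ℝ × ℝ × ℝ → ℝ) (t r : ℝ) : ℝ :=
  -(1 / r ^ 2) *
    (∫⁻ x in {x : ℝ × ℝ × ℝ | x.2.1 * t ≤ r},
        ENNReal.ofReal ((γ x) ^ 2) ∂(volume.restrict phaseSet)).toReal

open Topology



namespace K

lemma sq_s {y : ℝ} (hy : 1 ≤ y) : Real.sqrt (y ^ 2 - 1) ^ 2 = y ^ 2 - 1 :=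
  Real.sq_sqrt (by nlinarith)

lemma s_le {y : ℝ} (hy : 1 ≤ y) : Real.sqrt (y ^ 2 - 1) ≤ y := by
  have h := Real.sqrt_le_sqrt (show y ^ 2 - 1 ≤ y ^ 2 by linarith)
  calc Real.sqrt (y ^ 2 - 1) ≤ Real.sqrt (y ^ 2) := h
    _ = y := by rw [Real.sqrt_sq (by linarith)]

lemma ys_pos {y : ℝ} (hy : 1 ≤ y) : 0 < y + Real.sqrt (y ^ 2 - 1) := by
  have := Real.sqrt_nonneg (y ^ 2 - 1); linarith

lemma Gf_one (κ : ℝ) : Gf κ 1 = 0 := by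
  simp [Gf]

lemma Gf_continuousOn (κ : ℝ) : ContinuousOn (Gf κ) (Ici 1) := by
  have h1 : Continuous fun y : ℝ => Real.sqrt (y ^ 2 - 1) := by fun_prop
  apply ContinuousOn.sub h1.continuousOn
  apply ContinuousOn.mul continuousOn_const
  apply ContinuousOn.log (by fun_prop)
  intro y hy; exact (ys_pos hy).ne'

lemma hasDerivAt_Gf {κ y : ℝ} (hy : 1 < y) :
    HasDerivAt (Gf κ) ((y - κ) / Real.sqrt (y ^ 2 - 1)) y := by
  have h0 : (0:ℝ) < y ^ 2 - 1 := by nlinarith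
  have hs0 : 0 < Real.sqrt (y ^ 2 - 1) := Real.sqrt_pos.2 h0
  set s := Real.sqrt (y ^ 2 - 1) with hs
  have hin : HasDerivAt (fun y : ℝ => y ^ 2 - 1) (2 * y) y := by
    simpa using (hasDerivAt_pow 2 y).sub_const 1
  have hsq : HasDerivAt (fun y : ℝ => Real.sqrt (y ^ 2 - 1)) (y / s) y := by
    have := (Real.hasDerivAt_sqrt h0.ne').comp y hin
    refine this.congr_deriv ?_
    field_simp
    ring
  have hlog : HasDerivAt (fun y : ℝ => Real.log (y + Real.sqrt (y ^ 2 - 1)))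
      ((1 + y / s) / (y + s)) y := by
    exact HasDerivAt.log ((hasDerivAt_id y).add hsq) (ys_pos hy.le).ne'
  have := hsq.sub (hlog.const_mul κ)
  refine this.congr_deriv ?_
  have hys : 0 < y + s := ys_pos hy.le
  field_simp
  ring

lemma Gf_strictMonoOn {κ : ℝ} (hκ1 : κ < 1) : StrictMonoOn (Gf κ) (Ici 1) := by
  apply strictMonoOn_of_deriv_pos (convex_Ici 1) (Gf_continuousOn κ)
  intro y hy
  rw [interior_Ici] at hy
  rw [(hasDerivAt_Gf hy).deriv]
  have h0 : (0:ℝ) < y ^ 2 - 1 := by nlinarith [hy.out]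
  exact div_pos (by linarith [hy.out]) (Real.sqrt_pos.2 h0)

lemma Gf_lower {κ y : ℝ} (hκ0 : 0 < κ) (hy : 1 ≤ y) :
    Real.sqrt (y ^ 2 - 1) * ((1 - κ) - κ * Real.sqrt (y ^ 2 - 1)) ≤ Gf κ y := by
  set s := Real.sqrt (y ^ 2 - 1) with hs
  have h1 : Real.log (y + s) ≤ y + s - 1 := Real.log_le_sub_one_of_pos (ys_pos hy)
  have h2 : s ^ 2 = y ^ 2 - 1 := sq_s hy
  have h3 : y - 1 ≤ s ^ 2 := by nlinarith
  have : Gf κ y = s - κ * Real.log (y + s) := rfl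
  nlinarith [hκ0]

lemma Gf_upper {κ y : ℝ} (hκ0 : 0 < κ) (hy : 1 ≤ y) :
    Gf κ y ≤ Real.sqrt (y ^ 2 - 1) * ((1 - κ) + κ * Real.sqrt (y ^ 2 - 1)) := by
  set s := Real.sqrt (y ^ 2 - 1) with hs
  have hsn : 0 ≤ s := Real.sqrt_nonneg _
  have hys : 0 < y + s := ys_pos hy
  have h1 : 1 - (y + s)⁻¹ ≤ Real.log (y + s) := Real.one_sub_inv_le_log_of_pos hys
  have h2 : s - s ^ 2 ≤ 1 - (y + s)⁻¹ := by
    rw [← sub_nonneg]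
    have he : 1 - (y + s)⁻¹ - (s - s ^ 2) = ((y + s) - 1 - (s - s ^ 2) * (y + s)) / (y + s) := by
      field_simp
    rw [he]
    apply div_nonneg _ hys.le
    nlinarith [sq_nonneg s, sq_nonneg (1 - s), mul_nonneg hsn (sq_nonneg (1 - s))]
  have : Gf κ y = s - κ * Real.log (y + s) := rfl
  nlinarith [hκ0]

lemma Gf_exists_ge {κ : ℝ} (hκ0 : 0 < κ) (hκ1 : κ < 1) {x : ℝ} (hx : 0 ≤ x) :
    ∃ y, 1 ≤ y ∧ x ≤ Gf κ y := by
  refine ⟨(x + 4) ^ 2, by nlinarith, ?_⟩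
  set y : ℝ := (x + 4) ^ 2 with hy
  have hy1 : (1:ℝ) ≤ y := by nlinarith
  set s := Real.sqrt (y ^ 2 - 1) with hs
  have hsy : y - 1 ≤ s := by
    rw [hs]
    have : (y - 1) = Real.sqrt ((y-1)^2) := (Real.sqrt_sq (by linarith)).symm
    rw [this]
    apply Real.sqrt_le_sqrt
    nlinarith
  have hsley : s ≤ y := s_le hy1
  -- log (y + s) ≤ log (2 y) ≤ log 2 + log y ≤ 1 + 2 * sqrt y
  have hsqy : Real.sqrt y = x + 4 := by
    rw [hy, Real.sqrt_sq (by linarith)]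
  have hlogy : Real.log y ≤ 2 * (x + 4) := by
    have h1 : Real.log y = 2 * Real.log (x + 4) := by
      rw [hy, Real.log_pow]; norm_num
    have h2 : Real.log (x + 4) ≤ (x + 4) - 1 := Real.log_le_sub_one_of_pos (by linarith)
    linarith
  have hlog2 : Real.log 2 ≤ 1 := by
    have := Real.log_le_sub_one_of_pos (show (0:ℝ) < 2 by norm_num)
    linarith
  have hlog : Real.log (y + s) ≤ 1 + 2 * (x + 4) := by
    have h1 : Real.log (y + s) ≤ Real.log (2 * y) := by
      apply Real.log_le_log (ys_pos hy1)
      linarith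
    rw [Real.log_mul (by norm_num) (by positivity)] at h1
    linarith
  have : Gf κ y = s - κ * Real.log (y + s) := rfl
  rw [this]
  have hκlog : κ * Real.log (y + s) ≤ max 0 (1 + 2 * (x + 4)) := by
    rcases le_total (Real.log (y + s)) 0 with h | h
    · have : κ * Real.log (y + s) ≤ 0 := mul_nonpos_of_nonneg_of_nonpos hκ0.le h
      exact this.trans (le_max_left _ _)
    · have : κ * Real.log (y + s) ≤ 1 * (1 + 2 * (x + 4)) := by
        apply mul_le_mul hκ1.le hlog h (by norm_num)
      simpa using this.trans (le_max_right _ _)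
  have hmax : max 0 (1 + 2 * (x + 4)) = 1 + 2 * (x + 4) := max_eq_right (by linarith)
  rw [hmax] at hκlog
  nlinarith

lemma Gf_surjOn {κ : ℝ} (hκ0 : 0 < κ) (hκ1 : κ < 1) : SurjOn (Gf κ) (Ici 1) (Ici 0) := by
  intro x hx
  obtain ⟨Y, hY1, hYx⟩ := Gf_exists_ge hκ0 hκ1 hx.out
  have h := intermediate_value_Icc hY1 ((Gf_continuousOn κ).mono Icc_subset_Ici_self)
  have hx' : x ∈ Icc (Gf κ 1) (Gf κ Y) := by
    rw [Gf_one]; exact ⟨hx.out, hYx⟩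
  obtain ⟨y, hy, hyx⟩ := h hx'
  exact ⟨y, hy.1, hyx⟩

-- H basics
variable {κ : ℝ}

lemma Hf_mem (hκ0 : 0 < κ) (hκ1 : κ < 1) {x : ℝ} (hx : 0 ≤ x) : 1 ≤ Hf κ x :=
  Function.invFunOn_mem (Gf_surjOn hκ0 hκ1 hx)

lemma Gf_Hf (hκ0 : 0 < κ) (hκ1 : κ < 1) {x : ℝ} (hx : 0 ≤ x) : Gf κ (Hf κ x) = x :=
  Function.invFunOn_eq (Gf_surjOn hκ0 hκ1 hx)

lemma Hf_Gf (hκ1 : κ < 1) {y : ℝ} (hy : 1 ≤ y) : Hf κ (Gf κ y) = y :=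
  ((Gf_strictMonoOn hκ1).injOn).leftInvOn_invFunOn hy

lemma Hf_zero (hκ1 : κ < 1) : Hf κ 0 = 1 := by
  have := Hf_Gf (κ := κ) hκ1 (le_refl 1)
  rwa [Gf_one] at this

lemma Hf_strictMonoOn (hκ0 : 0 < κ) (hκ1 : κ < 1) : StrictMonoOn (Hf κ) (Ici 0) := by
  intro x1 h1 x2 h2 h12
  by_contra h
  push_neg at h
  have := (Gf_strictMonoOn hκ1).monotoneOn (Hf_mem hκ0 hκ1 h2.out) (Hf_mem hκ0 hκ1 h1.out) h
  rw [Gf_Hf hκ0 hκ1 h1.out, Gf_Hf hκ0 hκ1 h2.out] at this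
  linarith

lemma Hf_gt_one (hκ0 : 0 < κ) (hκ1 : κ < 1) {x : ℝ} (hx : 0 < x) : 1 < Hf κ x := by
  have := Hf_strictMonoOn hκ0 hκ1 (Set.mem_Ici.2 le_rfl) hx.le hx
  rwa [Hf_zero hκ1] at this

lemma Hf_continuousAt (hκ0 : 0 < κ) (hκ1 : κ < 1) {x : ℝ} (hx : 0 < x) :
    ContinuousAt (Hf κ) x := by
  rw [ContinuousAt]
  apply tendsto_order.2
  constructor
  · intro b hb
    rcases lt_or_ge b 1 with hb1 | hb1
    · filter_upwards [eventually_gt_nhds hx] with z hz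
      exact lt_of_lt_of_le hb1 (Hf_mem hκ0 hκ1 hz.le)
    · have hGb : Gf κ b < x := by
        have := (Gf_strictMonoOn hκ1) hb1 (Hf_mem hκ0 hκ1 hx.le) hb
        rwa [Gf_Hf hκ0 hκ1 hx.le] at this
      have hGb0 : 0 ≤ Gf κ b := by
        have := (Gf_strictMonoOn hκ1).monotoneOn (Set.mem_Ici.2 le_rfl) hb1 hb1
        rwa [Gf_one] at this
      filter_upwards [eventually_gt_nhds hGb] with z hz
      have := Hf_strictMonoOn hκ0 hκ1 hGb0 (hGb0.trans hz.le) hz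
      rwa [Hf_Gf hκ1 hb1] at this
  · intro b hb
    have hb1 : 1 ≤ b := le_trans (Hf_mem hκ0 hκ1 hx.le) hb.le
    have hGb : x < Gf κ b := by
      have := (Gf_strictMonoOn hκ1) (Hf_mem hκ0 hκ1 hx.le) hb1 hb
      rwa [Gf_Hf hκ0 hκ1 hx.le] at this
    filter_upwards [eventually_lt_nhds hGb, eventually_gt_nhds hx] with z hz hz0
    have := Hf_strictMonoOn hκ0 hκ1 (le_of_lt hz0) (hz0.le.trans hz.le) hz
    rwa [Hf_Gf hκ1 hb1] at this

lemma Hf_hasDerivAt (hκ0 : 0 < κ) (hκ1 : κ < 1) {x : ℝ} (hx : 0 < x) :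
    HasDerivAt (Hf κ) (Real.sqrt ((Hf κ x) ^ 2 - 1) / (Hf κ x - κ)) x := by
  have hy : 1 < Hf κ x := Hf_gt_one hκ0 hκ1 hx
  have hs0 : 0 < Real.sqrt ((Hf κ x) ^ 2 - 1) := Real.sqrt_pos.2 (by nlinarith)
  have hne : (Hf κ x - κ) / Real.sqrt ((Hf κ x) ^ 2 - 1) ≠ 0 := by
    apply ne_of_gt
    exact div_pos (by linarith) hs0
  have h := HasDerivAt.of_local_left_inverse (Hf_continuousAt hκ0 hκ1 hx)
    (hasDerivAt_Gf hy) hne ?_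
  · refine h.congr_deriv ?_
    rw [inv_div]
  · filter_upwards [eventually_gt_nhds hx] with z hz
    exact Gf_Hf hκ0 hκ1 hz.le

lemma exists_quad_bound (hκ0 : 0 < κ) (hκ1 : κ < 1) :
    ∃ δ > 0, ∀ x, 0 ≤ x → x ≤ δ →
      Real.sqrt ((Hf κ x) ^ 2 - 1) ≤ 2 / (1 - κ) * x ∧
      Hf κ x - 1 ≤ (2 / (1 - κ)) ^ 2 * x ^ 2 := by
  set ε := min 1 ((1 - κ) / (2 * κ)) with hε
  have hε0 : 0 < ε := lt_min one_pos (div_pos (by linarith) (by linarith))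
  have hεκ : κ * ε ≤ (1 - κ) / 2 := by
    have h1 : ε ≤ (1 - κ) / (2 * κ) := min_le_right _ _
    calc κ * ε ≤ κ * ((1 - κ) / (2 * κ)) := by nlinarith
      _ = (1 - κ) / 2 := by field_simp
  set Y := Real.sqrt (1 + ε ^ 2) with hY
  have hY2 : Y ^ 2 = 1 + ε ^ 2 := Real.sq_sqrt (by positivity)
  have hY0 : 0 ≤ Y := Real.sqrt_nonneg _
  have hY1 : 1 < Y := by nlinarith
  have hsY : Real.sqrt (Y ^ 2 - 1) = ε := by
    rw [hY2]; simp [Real.sqrt_sq hε0.le]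
  refine ⟨Gf κ Y, ?_, ?_⟩
  · have := Gf_strictMonoOn hκ1 (Set.mem_Ici.2 le_rfl) hY1.le hY1
    rwa [Gf_one] at this
  · intro x hx0 hxδ
    have hδ0 : 0 ≤ Gf κ Y := hx0.trans hxδ
    have hyY : Hf κ x ≤ Y := by
      have := (Hf_strictMonoOn hκ0 hκ1).monotoneOn hx0 hδ0 hxδ
      rwa [Hf_Gf hκ1 hY1.le] at this
    set y := Hf κ x with hy
    have hy1 : 1 ≤ y := Hf_mem hκ0 hκ1 hx0
    set s := Real.sqrt (y ^ 2 - 1) with hs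
    have hs0 : 0 ≤ s := Real.sqrt_nonneg _
    have hsε : s ≤ ε := by
      rw [hs, ← hsY]
      apply Real.sqrt_le_sqrt
      nlinarith
    have hGx : Gf κ y = x := Gf_Hf hκ0 hκ1 hx0
    have hlow := Gf_lower hκ0 hy1
    rw [hGx] at hlow
    -- x ≥ s ((1-κ) - κ s) ≥ s (1-κ)/2
    rw [← hs] at hlow
    have hκs : κ * s ≤ (1 - κ) / 2 := le_trans (by nlinarith) hεκ
    have hsx : s * ((1 - κ) / 2) ≤ x := by nlinarith [mul_le_mul_of_nonneg_left hκs hs0]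
    have h1 : s ≤ 2 / (1 - κ) * x := by
      rw [div_mul_eq_mul_div, le_div_iff₀ (by linarith)]
      nlinarith
    refine ⟨h1, ?_⟩
    have hsq : s ^ 2 = y ^ 2 - 1 := sq_s hy1
    have hy1s : y - 1 ≤ s ^ 2 := by nlinarith
    calc y - 1 ≤ s ^ 2 := hy1s
      _ ≤ (2 / (1 - κ) * x) ^ 2 := by nlinarith
      _ = (2 / (1 - κ)) ^ 2 * x ^ 2 := by ring

end K


namespace K
variable {m a ℓ : ℝ}

lemma kpa_pos (hm : 0 < m) (ha : 0 < a) (hℓ : 0 < ℓ) : 0 < kpa m a ℓ := by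
  unfold kpa
  positivity

lemma kpa_lt_one (hm : 0 < m) (ha : 0 < a) (hℓ : 0 < ℓ) : kpa m a ℓ < 1 := by
  unfold kpa
  rw [div_lt_one (by positivity)]
  have h := Real.sq_sqrt (show (0:ℝ) ≤ 1 + 4 * a ^ 2 * ℓ / m ^ 2 by positivity)
  have hs := Real.sqrt_nonneg (1 + 4 * a ^ 2 * ℓ / m ^ 2)
  have h2 : 0 < 4 * a ^ 2 * ℓ / m ^ 2 := by positivity
  nlinarith

lemma kpa_sq (hm : 0 < m) (ha : 0 < a) (hℓ : 0 < ℓ) :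
    (kpa m a ℓ) ^ 2 * (1 + 4 * a ^ 2 * ℓ / m ^ 2) = 1 := by
  unfold kpa
  rw [div_pow, one_pow, Real.sq_sqrt (by positivity)]
  field_simp

lemma pfn_pos (hm : 0 < m) (ha : 0 < a) (hℓ : 0 < ℓ) : 0 < pfn m a ℓ := by
  unfold pfn
  have hκ := kpa_pos hm ha hℓ
  exact div_pos hm (by nlinarith [mul_pos (mul_pos two_pos (pow_pos ha 2)) hκ])

lemma m_eq (hm : 0 < m) (ha : 0 < a) (hℓ : 0 < ℓ) :
    m = 2 * a ^ 2 * kpa m a ℓ * pfn m a ℓ := by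
  have hκ := kpa_pos hm ha hℓ
  unfold pfn
  field_simp

lemma l_eq (hm : 0 < m) (ha : 0 < a) (hℓ : 0 < ℓ) :
    ℓ = a ^ 2 * (pfn m a ℓ) ^ 2 * (1 - (kpa m a ℓ) ^ 2) := by
  have hκ := kpa_pos hm ha hℓ
  have h1 := kpa_sq hm ha hℓ
  have hp : pfn m a ℓ = m / (2 * a ^ 2 * kpa m a ℓ) := rfl
  rw [hp]
  field_simp at h1 ⊢
  nlinarith [h1]

end K

namespace K
variable {m a ℓ : ℝ}

lemma Rf_eq (m θ a ℓ : ℝ) :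
    Rf m θ a ℓ = pfn m a ℓ * (Hf (kpa m a ℓ) (|θ| / pfn m a ℓ) - kpa m a ℓ) := by
  unfold Rf; ring

lemma Hy_ge (hm : 0 < m) (ha : 0 < a) (hℓ : 0 < ℓ) (θ : ℝ) :
    1 ≤ Hf (kpa m a ℓ) (|θ| / pfn m a ℓ) :=
  Hf_mem (kpa_pos hm ha hℓ) (kpa_lt_one hm ha hℓ)
    (div_nonneg (abs_nonneg θ) (pfn_pos hm ha hℓ).le)

lemma Rf_pos (hm : 0 < m) (ha : 0 < a) (hℓ : 0 < ℓ) (θ : ℝ) : 0 < Rf m θ a ℓ := by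
  rw [Rf_eq]
  have h1 := Hy_ge hm ha hℓ θ
  have h2 := kpa_lt_one hm ha hℓ
  have h3 := pfn_pos hm ha hℓ
  nlinarith

lemma inner_abstract {a κ p y : ℝ} (ha : 0 < a) (hκ0 : 0 < κ) (hκ1 : κ < 1) (hp : 0 < p)
    (hy1 : 1 ≤ y) :
    1 + (2 * a ^ 2 * κ * p) / (a ^ 2 * (p * (y - κ)))
      - (a ^ 2 * p ^ 2 * (1 - κ ^ 2)) / (a ^ 2 * (p * (y - κ)) ^ 2)
      = (y ^ 2 - 1) / (y - κ) ^ 2 := by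
  have hyk : 0 < y - κ := by linarith
  field_simp
  ring

lemma inner_eq (hm : 0 < m) (ha : 0 < a) (hℓ : 0 < ℓ) (θ : ℝ) :
    1 + m / (a ^ 2 * Rf m θ a ℓ) - ℓ / (a ^ 2 * (Rf m θ a ℓ) ^ 2)
      = ((Hf (kpa m a ℓ) (|θ| / pfn m a ℓ)) ^ 2 - 1)
        / (Hf (kpa m a ℓ) (|θ| / pfn m a ℓ) - kpa m a ℓ) ^ 2 := by
  have h := inner_abstract (κ := kpa m a ℓ) (p := pfn m a ℓ)
    (y := Hf (kpa m a ℓ) (|θ| / pfn m a ℓ)) ha (kpa_pos hm ha hℓ) (kpa_lt_one hm ha hℓ)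
    (pfn_pos hm ha hℓ) (Hy_ge hm ha hℓ θ)
  rw [← m_eq hm ha hℓ, ← l_eq hm ha hℓ, ← Rf_eq] at h
  exact h

lemma Vf_eq (hm : 0 < m) (ha : 0 < a) (hℓ : 0 < ℓ) (θ : ℝ) :
    Vf m θ a ℓ = Real.sign θ * a *
      (Real.sqrt ((Hf (kpa m a ℓ) (|θ| / pfn m a ℓ)) ^ 2 - 1)
        / (Hf (kpa m a ℓ) (|θ| / pfn m a ℓ) - kpa m a ℓ)) := by
  unfold Vf
  rw [inner_eq hm ha hℓ θ]
  congr 1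
  have hy1 := Hy_ge hm ha hℓ θ
  have hκ1 := kpa_lt_one hm ha hℓ
  rw [Real.sqrt_div (by nlinarith), Real.sqrt_sq (by linarith)]

lemma sign_sq_mul (hm : 0 < m) (ha : 0 < a) (hℓ : 0 < ℓ) (θ : ℝ) :
    (Real.sign θ) ^ 2 * ((Hf (kpa m a ℓ) (|θ| / pfn m a ℓ)) ^ 2 - 1)
      = (Hf (kpa m a ℓ) (|θ| / pfn m a ℓ)) ^ 2 - 1 := by
  rcases lt_trichotomy θ 0 with h | h | h
  · rw [Real.sign_of_neg h]; ring
  · subst h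
    have : |(0:ℝ)| / pfn m a ℓ = 0 := by simp
    rw [this, Hf_zero (kpa_lt_one hm ha hℓ)]
    ring
  · rw [Real.sign_of_pos h]; ring

lemma energy_abstract {a κ p y sg : ℝ} (ha : 0 < a) (hκ0 : 0 < κ) (hκ1 : κ < 1) (hp : 0 < p)
    (hy1 : 1 ≤ y) (hsg : sg ^ 2 * (y ^ 2 - 1) = y ^ 2 - 1) :
    (sg * a * (Real.sqrt (y ^ 2 - 1) / (y - κ))) ^ 2
      - (2 * a ^ 2 * κ * p) / (p * (y - κ)) + (a ^ 2 * p ^ 2 * (1 - κ ^ 2)) / (p * (y - κ)) ^ 2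
      = a ^ 2 := by
  have hyk : 0 < y - κ := by linarith
  have hsq : (Real.sqrt (y ^ 2 - 1)) ^ 2 = y ^ 2 - 1 := sq_s hy1
  set s := Real.sqrt (y ^ 2 - 1) with hsdef
  have h1 : (sg * a * (s / (y - κ))) ^ 2 = sg ^ 2 * (y ^ 2 - 1) * a ^ 2 / (y - κ) ^ 2 := by
    rw [mul_pow, mul_pow, div_pow, hsq]; ring
  rw [h1, hsg]
  field_simp
  ring

lemma energy (hm : 0 < m) (ha : 0 < a) (hℓ : 0 < ℓ) (θ : ℝ) :
    (Vf m θ a ℓ) ^ 2 - m / Rf m θ a ℓ + ℓ / (Rf m θ a ℓ) ^ 2 = a ^ 2 := by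
  have h := energy_abstract (κ := kpa m a ℓ) (p := pfn m a ℓ)
    (y := Hf (kpa m a ℓ) (|θ| / pfn m a ℓ)) (sg := Real.sign θ) ha (kpa_pos hm ha hℓ)
    (kpa_lt_one hm ha hℓ) (pfn_pos hm ha hℓ) (Hy_ge hm ha hℓ θ) (sign_sq_mul hm ha hℓ θ)
  rw [← m_eq hm ha hℓ, ← l_eq hm ha hℓ, ← Rf_eq, ← Vf_eq hm ha hℓ θ] at h
  exact h

end K

namespace K
variable {m a ℓ : ℝ}

lemma x_hasDeriv {p : ℝ} (hp : 0 < p) {θ : ℝ} (hθ : θ ≠ 0) :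
    HasDerivAt (fun θ' : ℝ => |θ'| / p) (Real.sign θ / p) θ := by
  rcases hθ.lt_or_gt with h | h
  · have h1 : HasDerivAt (fun θ' : ℝ => -θ' / p) (-1 / p) θ := by
      simpa using (hasDerivAt_id θ).neg.div_const p
    rw [Real.sign_of_neg h]
    apply h1.congr_of_eventuallyEq
    filter_upwards [eventually_lt_nhds h] with z hz
    rw [abs_of_neg hz]
  · have h1 : HasDerivAt (fun θ' : ℝ => θ' / p) (1 / p) θ := (hasDerivAt_id θ).div_const p
    rw [Real.sign_of_pos h]
    apply h1.congr_of_eventuallyEq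
    filter_upwards [eventually_gt_nhds h] with z hz
    rw [abs_of_pos hz]

lemma y_hasDeriv (hm : 0 < m) (ha : 0 < a) (hℓ : 0 < ℓ) {θ : ℝ} (hθ : θ ≠ 0) :
    HasDerivAt (fun θ' : ℝ => Hf (kpa m a ℓ) (|θ'| / pfn m a ℓ))
      (Real.sqrt ((Hf (kpa m a ℓ) (|θ| / pfn m a ℓ)) ^ 2 - 1)
        / (Hf (kpa m a ℓ) (|θ| / pfn m a ℓ) - kpa m a ℓ) * (Real.sign θ / pfn m a ℓ)) θ := by
  have hp := pfn_pos hm ha hℓ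
  have hx : 0 < |θ| / pfn m a ℓ := div_pos (abs_pos.2 hθ) hp
  exact (Hf_hasDerivAt (kpa_pos hm ha hℓ) (kpa_lt_one hm ha hℓ) hx).comp θ (x_hasDeriv hp hθ)

lemma Rf_hasDerivAt_ne (hm : 0 < m) (ha : 0 < a) (hℓ : 0 < ℓ) {θ : ℝ} (hθ : θ ≠ 0) :
    HasDerivAt (fun θ' : ℝ => Rf m θ' a ℓ) (Vf m θ a ℓ / a) θ := by
  have hp := pfn_pos hm ha hℓ
  have h := ((y_hasDeriv hm ha hℓ hθ).const_mul (pfn m a ℓ)).sub_const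
    (pfn m a ℓ * kpa m a ℓ)
  have hfun : (fun θ' : ℝ => Rf m θ' a ℓ)
      = fun θ' : ℝ => pfn m a ℓ * Hf (kpa m a ℓ) (|θ'| / pfn m a ℓ)
        - pfn m a ℓ * kpa m a ℓ := rfl
  rw [hfun]
  refine h.congr_deriv ?_
  rw [Vf_eq hm ha hℓ θ]
  have hy1 := Hy_ge hm ha hℓ θ
  have hκ1 := kpa_lt_one hm ha hℓ
  have hyκ : Hf (kpa m a ℓ) (|θ| / pfn m a ℓ) - kpa m a ℓ ≠ 0 := by
    have : kpa m a ℓ < 1 := hκ1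
    intro hc; nlinarith [hc]
  field_simp

lemma Vf_zero_of_zero (m a ℓ : ℝ) : Vf m 0 a ℓ = 0 := by
  unfold Vf
  simp

lemma Rf_hasDerivAt_zero (hm : 0 < m) (ha : 0 < a) (hℓ : 0 < ℓ) :
    HasDerivAt (fun θ' : ℝ => Rf m θ' a ℓ) 0 0 := by
  have hκ0 := kpa_pos hm ha hℓ
  have hκ1 := kpa_lt_one hm ha hℓ
  have hp := pfn_pos hm ha hℓ
  obtain ⟨δ, hδ0, hquad⟩ := exists_quad_bound hκ0 hκ1
  set κ := kpa m a ℓ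
  set p := pfn m a ℓ with hpdef
  set C := (2 / (1 - κ)) ^ 2 with hC
  have hC0 : 0 < C := by
    rw [hC]
    exact pow_pos (div_pos two_pos (by linarith)) 2
  rw [hasDerivAt_iff_tendsto_slope]
  apply squeeze_zero_norm' (a := fun θ' : ℝ => C / p * |θ'|)
  · have hev : ∀ᶠ θ' in 𝓝 (0:ℝ), |θ' - 0| < p * δ := eventually_abs_sub_lt 0 (by positivity)
    filter_upwards [hev.filter_mono nhdsWithin_le_nhds, self_mem_nhdsWithin] with z hz hz0
    simp only [sub_zero] at hz
    have hz0' : z ≠ 0 := hz0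
    have hx0 : 0 ≤ |z| / p := div_nonneg (abs_nonneg z) hp.le
    have hxδ : |z| / p ≤ δ := by
      rw [div_le_iff₀ hp]
      linarith [hz.le]
    have hb := (hquad (|z| / p) hx0 hxδ).2
    have hR0 : Rf m 0 a ℓ = p * (1 - κ) := by
      rw [Rf_eq]
      have : |(0:ℝ)| / p = 0 := by simp
      rw [this, Hf_zero hκ1]
    have hRz : Rf m z a ℓ = p * (Hf κ (|z| / p) - κ) := Rf_eq m z a ℓ
    have hy1 : 1 ≤ Hf κ (|z| / p) := Hf_mem hκ0 hκ1 hx0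
    have hslope : slope (fun θ' : ℝ => Rf m θ' a ℓ) 0 z
        = (Rf m z a ℓ - Rf m 0 a ℓ) / z := by
      rw [slope_def_field]
      ring
    rw [hslope, hRz, hR0]
    rw [Real.norm_eq_abs, abs_div]
    rw [div_le_iff₀ (abs_pos.2 hz0')]
    have habs : |p * (Hf κ (|z| / p) - κ) - p * (1 - κ)| = p * (Hf κ (|z| / p) - 1) := by
      rw [show p * (Hf κ (|z| / p) - κ) - p * (1 - κ) = p * (Hf κ (|z| / p) - 1) by ring]
      rw [abs_of_nonneg (by nlinarith)]
    rw [habs]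
    have h2 : p * (Hf κ (|z| / p) - 1) ≤ p * (C * (|z| / p) ^ 2) := by
      apply mul_le_mul_of_nonneg_left _ hp.le
      rw [hC]
      exact hb
    calc p * (Hf κ (|z| / p) - 1) ≤ p * (C * (|z| / p) ^ 2) := h2
      _ = C / p * |z| * |z| := by
          have : |z| * |z| = z ^ 2 := by rw [abs_mul_abs_self]; ring
          field_simp
  · have : Tendsto (fun θ' : ℝ => C / p * |θ'|) (𝓝 0) (𝓝 (C / p * |(0:ℝ)|)) := by
      apply Tendsto.const_mul
      exact continuous_abs.tendsto 0
    simp only [abs_zero, mul_zero] at this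
    exact this.mono_left nhdsWithin_le_nhds

lemma Rf_hasDerivAt (hm : 0 < m) (ha : 0 < a) (hℓ : 0 < ℓ) (θ : ℝ) :
    HasDerivAt (fun θ' : ℝ => Rf m θ' a ℓ) (Vf m θ a ℓ / a) θ := by
  rcases eq_or_ne θ 0 with rfl | hθ
  · rw [Vf_zero_of_zero, zero_div]
    exact Rf_hasDerivAt_zero hm ha hℓ
  · exact Rf_hasDerivAt_ne hm ha hℓ hθ

end K

namespace K
variable {m a ℓ : ℝ}

lemma Vf_ne_zero (hm : 0 < m) (ha : 0 < a) (hℓ : 0 < ℓ) {θ : ℝ} (hθ : θ ≠ 0) :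
    Vf m θ a ℓ ≠ 0 := by
  rw [Vf_eq hm ha hℓ θ]
  have hκ0 := kpa_pos hm ha hℓ
  have hκ1 := kpa_lt_one hm ha hℓ
  have hp := pfn_pos hm ha hℓ
  have hy1 : 1 < Hf (kpa m a ℓ) (|θ| / pfn m a ℓ) :=
    Hf_gt_one hκ0 hκ1 (div_pos (abs_pos.2 hθ) hp)
  have hs : 0 < Real.sqrt ((Hf (kpa m a ℓ) (|θ| / pfn m a ℓ)) ^ 2 - 1) :=
    Real.sqrt_pos.2 (by nlinarith)
  have hyκ : 0 < Hf (kpa m a ℓ) (|θ| / pfn m a ℓ) - kpa m a ℓ := by linarith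
  have hsgn : Real.sign θ ≠ 0 := by
    rcases hθ.lt_or_gt with h | h
    · rw [Real.sign_of_neg h]; norm_num
    · rw [Real.sign_of_pos h]; norm_num
  exact mul_ne_zero (mul_ne_zero hsgn ha.ne') (div_pos hs hyκ).ne'

lemma W_hasDerivAt (hm : 0 < m) (ha : 0 < a) (hℓ : 0 < ℓ) {θ : ℝ} (hθ : θ ≠ 0) :
    ∃ D : ℝ, HasDerivAt (fun θ' : ℝ =>
      a * (Real.sqrt ((Hf (kpa m a ℓ) (|θ'| / pfn m a ℓ)) ^ 2 - 1)
        / (Hf (kpa m a ℓ) (|θ'| / pfn m a ℓ) - kpa m a ℓ))) D θ := by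
  have hκ0 := kpa_pos hm ha hℓ
  have hκ1 := kpa_lt_one hm ha hℓ
  have hp := pfn_pos hm ha hℓ
  have hy := y_hasDeriv hm ha hℓ hθ
  have hy1 : 1 < Hf (kpa m a ℓ) (|θ| / pfn m a ℓ) :=
    Hf_gt_one hκ0 hκ1 (div_pos (abs_pos.2 hθ) hp)
  have h2 : HasDerivAt (fun θ' : ℝ => (Hf (kpa m a ℓ) (|θ'| / pfn m a ℓ)) ^ 2 - 1)
      (2 * Hf (kpa m a ℓ) (|θ| / pfn m a ℓ) ^ 1 *
        (Real.sqrt ((Hf (kpa m a ℓ) (|θ| / pfn m a ℓ)) ^ 2 - 1)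
          / (Hf (kpa m a ℓ) (|θ| / pfn m a ℓ) - kpa m a ℓ) * (Real.sign θ / pfn m a ℓ))) θ :=
    (hy.pow 2).sub_const 1
  have hne : (Hf (kpa m a ℓ) (|θ| / pfn m a ℓ)) ^ 2 - 1 ≠ 0 := by nlinarith
  have hnum := (Real.hasDerivAt_sqrt hne).comp θ h2
  have hden := hy.sub_const (kpa m a ℓ)
  have hdenne : Hf (kpa m a ℓ) (|θ| / pfn m a ℓ) - kpa m a ℓ ≠ 0 := by nlinarith
  exact ⟨_, ((hnum.div hden hdenne).const_mul a)⟩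

lemma Vf_diff_ne (hm : 0 < m) (ha : 0 < a) (hℓ : 0 < ℓ) {θ : ℝ} (hθ : θ ≠ 0) :
    ∃ D : ℝ, HasDerivAt (fun θ' : ℝ => Vf m θ' a ℓ) D θ := by
  obtain ⟨D, hW⟩ := W_hasDerivAt hm ha hℓ hθ
  rcases hθ.lt_or_gt with h | h
  · refine ⟨-D, ?_⟩
    apply hW.fun_neg.congr_of_eventuallyEq
    filter_upwards [eventually_lt_nhds h] with z hz
    rw [Vf_eq hm ha hℓ z, Real.sign_of_neg hz]; ring
  · refine ⟨D, ?_⟩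
    apply hW.congr_of_eventuallyEq
    filter_upwards [eventually_gt_nhds h] with z hz
    rw [Vf_eq hm ha hℓ z, Real.sign_of_pos hz]; ring

lemma Vf_hasDerivAt_ne (hm : 0 < m) (ha : 0 < a) (hℓ : 0 < ℓ) {θ : ℝ} (hθ : θ ≠ 0) :
    HasDerivAt (fun θ' : ℝ => Vf m θ' a ℓ)
      ((ℓ / (Rf m θ a ℓ) ^ 3 - m / (2 * (Rf m θ a ℓ) ^ 2)) / a) θ := by
  obtain ⟨D, hD⟩ := Vf_diff_ne hm ha hℓ hθ
  have hRθ := Rf_hasDerivAt hm ha hℓ θ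
  have hRpos := Rf_pos hm ha hℓ θ
  have hVne := Vf_ne_zero hm ha hℓ hθ
  set v := Vf m θ a ℓ with hv
  set R := Rf m θ a ℓ with hR
  have hsqfun : (fun θ' : ℝ => (Vf m θ' a ℓ) ^ 2)
      = fun θ' : ℝ => a ^ 2 + m * (Rf m θ' a ℓ)⁻¹ - ℓ * ((Rf m θ' a ℓ) ^ 2)⁻¹ := by
    funext z
    have h := energy hm ha hℓ z
    have hRz := Rf_pos hm ha hℓ z
    rw [← div_eq_mul_inv, ← div_eq_mul_inv]
    linarith
  have h1 : HasDerivAt (fun θ' : ℝ => (Vf m θ' a ℓ) ^ 2) (2 * v * D) θ := by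
    simpa using hD.fun_pow 2
  have hinv1 : HasDerivAt (fun θ' : ℝ => m * (Rf m θ' a ℓ)⁻¹)
      (m * (-(v / a) / R ^ 2)) θ := (hRθ.inv hRpos.ne').const_mul m
  have hpow2 : HasDerivAt (fun θ' : ℝ => ℓ * ((Rf m θ' a ℓ) ^ 2)⁻¹)
      (ℓ * (-(2 * R ^ 1 * (v / a)) / (R ^ 2) ^ 2)) θ :=
    ((hRθ.pow 2).inv (pow_ne_zero 2 hRpos.ne')).const_mul ℓ
  have h2 : HasDerivAt (fun θ' : ℝ => a ^ 2 + m * (Rf m θ' a ℓ)⁻¹ - ℓ * ((Rf m θ' a ℓ) ^ 2)⁻¹)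
      (m * (-(v / a) / R ^ 2) - ℓ * (-(2 * R ^ 1 * (v / a)) / (R ^ 2) ^ 2)) θ := by
    simpa using ((hinv1.const_add (a ^ 2)).fun_sub hpow2)
  rw [← hsqfun] at h2
  have huniq : 2 * v * D = m * (-(v / a) / R ^ 2) - ℓ * (-(2 * R ^ 1 * (v / a)) / (R ^ 2) ^ 2) :=
    h1.unique h2
  have hkey : 2 * v * ((ℓ / R ^ 3 - m / (2 * R ^ 2)) / a)
      = m * (-(v / a) / R ^ 2) - ℓ * (-(2 * R ^ 1 * (v / a)) / (R ^ 2) ^ 2) := by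
    field_simp
    ring
  have hcancel : D = (ℓ / R ^ 3 - m / (2 * R ^ 2)) / a := by
    have h := huniq.trans hkey.symm
    exact mul_left_cancel₀ (mul_ne_zero two_ne_zero hVne) h
  rw [← hcancel]
  exact hD

end K

namespace K
variable {m a ℓ : ℝ}

lemma y_tendsto (hm : 0 < m) (ha : 0 < a) (hℓ : 0 < ℓ) :
    Tendsto (fun θ' : ℝ => Hf (kpa m a ℓ) (|θ'| / pfn m a ℓ)) (𝓝 0) (𝓝 1) := by
  have hκ0 := kpa_pos hm ha hℓ
  have hκ1 := kpa_lt_one hm ha hℓ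
  have hp := pfn_pos hm ha hℓ
  obtain ⟨δ, hδ0, hquad⟩ := exists_quad_bound hκ0 hκ1
  set κ := kpa m a ℓ
  set p := pfn m a ℓ
  set C := (2 / (1 - κ)) ^ 2 with hC
  apply tendsto_of_tendsto_of_tendsto_of_le_of_le' (g := fun _ : ℝ => (1:ℝ))
    (h := fun θ' : ℝ => 1 + C * (|θ'| / p) ^ 2)
  · exact tendsto_const_nhds
  · have hcont : Continuous fun θ' : ℝ => 1 + C * (|θ'| / p) ^ 2 := by fun_prop
    have := hcont.tendsto 0
    simpa using this
  · filter_upwards with z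
    exact Hf_mem hκ0 hκ1 (div_nonneg (abs_nonneg z) hp.le)
  · filter_upwards [eventually_abs_sub_lt 0 (show (0:ℝ) < p * δ by positivity)] with z hz
    simp only [sub_zero] at hz
    have hx0 : 0 ≤ |z| / p := div_nonneg (abs_nonneg z) hp.le
    have hxδ : |z| / p ≤ δ := by rw [div_le_iff₀ hp]; linarith
    have := (hquad (|z| / p) hx0 hxδ).2
    linarith

lemma s_tendsto (hm : 0 < m) (ha : 0 < a) (hℓ : 0 < ℓ) :
    Tendsto (fun θ' : ℝ => Real.sqrt ((Hf (kpa m a ℓ) (|θ'| / pfn m a ℓ)) ^ 2 - 1))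
      (𝓝 0) (𝓝 0) := by
  have hg : Continuous fun y : ℝ => Real.sqrt (y ^ 2 - 1) := by fun_prop
  have h1 : Tendsto (fun y : ℝ => Real.sqrt (y ^ 2 - 1)) (𝓝 1) (𝓝 0) := by
    have := hg.tendsto 1
    norm_num at this
    exact this
  exact h1.comp (y_tendsto hm ha hℓ)

set_option maxHeartbeats 1000000 in
lemma Vf_hasDerivAt_zero (hm : 0 < m) (ha : 0 < a) (hℓ : 0 < ℓ) :
    HasDerivAt (fun θ' : ℝ => Vf m θ' a ℓ)
      (a / (pfn m a ℓ * (1 - kpa m a ℓ) ^ 2)) 0 := by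
  have hκ0 := kpa_pos hm ha hℓ
  have hκ1 := kpa_lt_one hm ha hℓ
  have hp := pfn_pos hm ha hℓ
  obtain ⟨κ, hκdef⟩ : ∃ x : ℝ, x = kpa m a ℓ := ⟨_, rfl⟩
  obtain ⟨p, hpdef⟩ : ∃ x : ℝ, x = pfn m a ℓ := ⟨_, rfl⟩
  rw [← hκdef] at hκ0 hκ1
  rw [← hpdef] at hp
  rw [← hκdef, ← hpdef]
  obtain ⟨δ, hδ0, hquad⟩ := exists_quad_bound hκ0 hκ1
  rw [hasDerivAt_iff_tendsto_slope]
  obtain ⟨yf, hyf⟩ : ∃ f : ℝ → ℝ, f = fun θ' : ℝ => Hf κ (|θ'| / p) := ⟨_, rfl⟩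
  obtain ⟨sf, hsf⟩ : ∃ f : ℝ → ℝ, f = fun θ' : ℝ => Real.sqrt ((yf θ') ^ 2 - 1) := ⟨_, rfl⟩
  have hyt : Tendsto yf (𝓝[≠] (0:ℝ)) (𝓝 1) := by
    rw [hyf, hκdef, hpdef]
    exact (y_tendsto hm ha hℓ).mono_left nhdsWithin_le_nhds
  have hst : Tendsto sf (𝓝[≠] (0:ℝ)) (𝓝 0) := by
    rw [hsf, hyf, hκdef, hpdef]
    exact (s_tendsto hm ha hℓ).mono_left nhdsWithin_le_nhds
  have hlo : Tendsto (fun θ' : ℝ => a / (p * (yf θ' - κ) * ((1 - κ) + κ * sf θ')))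
      (𝓝[≠] (0:ℝ)) (𝓝 (a / (p * (1 - κ) ^ 2))) := by
    have hden : Tendsto (fun θ' : ℝ => p * (yf θ' - κ) * ((1 - κ) + κ * sf θ'))
        (𝓝[≠] (0:ℝ)) (𝓝 (p * (1 - κ) * ((1 - κ) + κ * 0))) :=
      (tendsto_const_nhds.mul (hyt.sub_const κ)).mul
        (tendsto_const_nhds.add (tendsto_const_nhds.mul hst))
    have hne : p * (1 - κ) * ((1 - κ) + κ * 0) ≠ 0 := by
      have h1 : (0:ℝ) < 1 - κ := by linarith
      have : (0:ℝ) < p * (1 - κ) * ((1 - κ) + κ * 0) := by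
        nlinarith [mul_pos (mul_pos hp h1) h1]
      exact this.ne'
    have hca : Tendsto (fun _ : ℝ => a) (𝓝[≠] (0:ℝ)) (𝓝 a) := tendsto_const_nhds
    have := hca.div hden hne
    rw [show p * (1 - κ) * ((1 - κ) + κ * 0) = p * (1 - κ) ^ 2 by ring] at this
    exact this
  have hhi : Tendsto (fun θ' : ℝ => a / (p * (yf θ' - κ) * ((1 - κ) - κ * sf θ')))
      (𝓝[≠] (0:ℝ)) (𝓝 (a / (p * (1 - κ) ^ 2))) := by
    have hden : Tendsto (fun θ' : ℝ => p * (yf θ' - κ) * ((1 - κ) - κ * sf θ'))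
        (𝓝[≠] (0:ℝ)) (𝓝 (p * (1 - κ) * ((1 - κ) - κ * 0))) :=
      (tendsto_const_nhds.mul (hyt.sub_const κ)).mul
        (tendsto_const_nhds.sub (tendsto_const_nhds.mul hst))
    have hne : p * (1 - κ) * ((1 - κ) - κ * 0) ≠ 0 := by
      have h1 : (0:ℝ) < 1 - κ := by linarith
      have : (0:ℝ) < p * (1 - κ) * ((1 - κ) - κ * 0) := by
        nlinarith [mul_pos (mul_pos hp h1) h1]
      exact this.ne'
    have hca : Tendsto (fun _ : ℝ => a) (𝓝[≠] (0:ℝ)) (𝓝 a) := tendsto_const_nhds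
    have := hca.div hden hne
    rw [show p * (1 - κ) * ((1 - κ) - κ * 0) = p * (1 - κ) ^ 2 by ring] at this
    exact this
  have hρ : (0:ℝ) < p * min δ ((1 - κ) ^ 2 / (4 * κ)) :=
    mul_pos hp (lt_min hδ0 (div_pos (pow_pos (by linarith) 2) (by linarith)))
  have hbound : ∀ z : ℝ, |z| < p * min δ ((1 - κ) ^ 2 / (4 * κ)) → z ≠ 0 →
      a / (p * (yf z - κ) * ((1 - κ) + κ * sf z)) ≤ slope (fun θ' : ℝ => Vf m θ' a ℓ) 0 z ∧
      slope (fun θ' : ℝ => Vf m θ' a ℓ) 0 z ≤ a / (p * (yf z - κ) * ((1 - κ) - κ * sf z)) := by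
    intro z hz hz0'
    have hyfz : yf z = Hf κ (|z| / p) := by rw [hyf]
    have hsfz : sf z = Real.sqrt ((yf z) ^ 2 - 1) := by rw [hsf]
    have hzabs : 0 < |z| := abs_pos.2 hz0'
    have hx0 : 0 < |z| / p := div_pos hzabs hp
    have hxδ : |z| / p ≤ δ := by
      rw [div_le_iff₀ hp]
      have := min_le_left δ ((1 - κ) ^ 2 / (4 * κ))
      nlinarith [hz.le]
    have hxsmall : |z| / p ≤ (1 - κ) ^ 2 / (4 * κ) := by
      rw [div_le_iff₀ hp]
      have := min_le_right δ ((1 - κ) ^ 2 / (4 * κ))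
      nlinarith [hz.le]
    have hy1 : 1 < yf z := by
      rw [hyfz]; exact Hf_gt_one hκ0 hκ1 hx0
    have hs0 : 0 < sf z := by
      rw [hsfz]; exact Real.sqrt_pos.2 (by nlinarith [hy1])
    have hyκ : 0 < yf z - κ := by linarith
    have h1κ : (0:ℝ) < 1 - κ := by linarith
    have hsb : sf z ≤ 2 / (1 - κ) * (|z| / p) := by
      have h := (hquad (|z| / p) hx0.le hxδ).1
      rw [hsfz, hyfz]
      exact h
    have hsmall : κ * sf z ≤ (1 - κ) / 2 := by
      have h2 : 2 / (1 - κ) * (|z| / p) ≤ 2 / (1 - κ) * ((1 - κ) ^ 2 / (4 * κ)) :=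
        mul_le_mul_of_nonneg_left hxsmall (le_of_lt (div_pos two_pos h1κ))
      have h3 : 2 / (1 - κ) * ((1 - κ) ^ 2 / (4 * κ)) = (1 - κ) / (2 * κ) := by
        field_simp
        ring
      rw [h3] at h2
      have h4 : sf z ≤ (1 - κ) / (2 * κ) := by linarith
      calc κ * sf z ≤ κ * ((1 - κ) / (2 * κ)) := by nlinarith
        _ = (1 - κ) / 2 := by field_simp
    have hGz : Gf κ (yf z) = |z| / p := by
      rw [hyfz]; exact Gf_Hf hκ0 hκ1 hx0.le
    have hup' : |z| / p ≤ sf z * ((1 - κ) + κ * sf z) := by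
      have h := Gf_upper (y := yf z) hκ0 hy1.le
      rw [hGz, ← hsfz] at h
      exact h
    have hlo' : sf z * ((1 - κ) - κ * sf z) ≤ |z| / p := by
      have h := Gf_lower (y := yf z) hκ0 hy1.le
      rw [hGz, ← hsfz] at h
      exact h
    have hslope : slope (fun θ' : ℝ => Vf m θ' a ℓ) 0 z = a * (sf z / (yf z - κ)) / |z| := by
      rw [slope_def_field, Vf_zero_of_zero, Vf_eq hm ha hℓ z]
      rw [← hκdef, ← hpdef, ← hyfz, ← hsfz]
      rcases hz0'.lt_or_gt with h | h
      · rw [Real.sign_of_neg h, abs_of_neg h]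
        rw [div_eq_div_iff (by linarith) (by linarith)]
        ring
      · rw [Real.sign_of_pos h, abs_of_pos h]
        rw [div_eq_div_iff (by linarith) (by linarith)]
        ring
    have habs : |z| = p * (|z| / p) := by field_simp
    have hA1 : (0:ℝ) < p * (yf z - κ) * ((1 - κ) + κ * sf z) := by
      apply mul_pos (mul_pos hp hyκ)
      nlinarith
    have hA2 : (0:ℝ) < p * (yf z - κ) * ((1 - κ) - κ * sf z) := by
      apply mul_pos (mul_pos hp hyκ)
      linarith
    constructor
    · rw [hslope, div_le_div_iff₀ hA1 hzabs]
      have hexp : a * (sf z / (yf z - κ)) * (p * (yf z - κ) * ((1 - κ) + κ * sf z))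
          = a * p * (sf z * ((1 - κ) + κ * sf z)) := by
        field_simp
      rw [hexp, habs]
      have hmm := mul_le_mul_of_nonneg_left hup' (mul_pos ha hp).le
      nlinarith [hmm]
    · rw [hslope, div_le_div_iff₀ hzabs hA2]
      have hexp : a * (sf z / (yf z - κ)) * (p * (yf z - κ) * ((1 - κ) - κ * sf z))
          = a * p * (sf z * ((1 - κ) - κ * sf z)) := by
        field_simp
      rw [hexp, habs]
      have hmm := mul_le_mul_of_nonneg_left hlo' (mul_pos ha hp).le
      nlinarith [hmm]
  apply tendsto_of_tendsto_of_tendsto_of_le_of_le' hlo hhi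
  · filter_upwards [(eventually_abs_sub_lt 0 hρ).filter_mono nhdsWithin_le_nhds,
      self_mem_nhdsWithin] with z hz hz0
    simp only [sub_zero] at hz
    exact (hbound z hz hz0).1
  · filter_upwards [(eventually_abs_sub_lt 0 hρ).filter_mono nhdsWithin_le_nhds,
      self_mem_nhdsWithin] with z hz hz0
    simp only [sub_zero] at hz
    exact (hbound z hz hz0).2

end K

namespace K
variable {m a ℓ : ℝ}

lemma Rf_zero_eq (hm : 0 < m) (ha : 0 < a) (hℓ : 0 < ℓ) :
    Rf m 0 a ℓ = pfn m a ℓ * (1 - kpa m a ℓ) := by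
  rw [Rf_eq]
  have : |(0:ℝ)| / pfn m a ℓ = 0 := by simp
  rw [this, Hf_zero (kpa_lt_one hm ha hℓ)]

lemma force_value (hm : 0 < m) (ha : 0 < a) (hℓ : 0 < ℓ) :
    (ℓ / (Rf m 0 a ℓ) ^ 3 - m / (2 * (Rf m 0 a ℓ) ^ 2)) / a
      = a / (pfn m a ℓ * (1 - kpa m a ℓ) ^ 2) := by
  have hκ0 := kpa_pos hm ha hℓ
  have hκ1 := kpa_lt_one hm ha hℓ
  have hp := pfn_pos hm ha hℓ
  have hm2 := m_eq hm ha hℓ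
  have hl2 := l_eq hm ha hℓ
  have hR0 := Rf_zero_eq hm ha hℓ
  obtain ⟨κ, hκdef⟩ : ∃ x : ℝ, x = kpa m a ℓ := ⟨_, rfl⟩
  obtain ⟨p, hpdef⟩ : ∃ x : ℝ, x = pfn m a ℓ := ⟨_, rfl⟩
  rw [← hκdef] at hκ0 hκ1
  rw [← hpdef] at hp
  rw [← hκdef, ← hpdef] at hm2 hl2 hR0 ⊢
  rw [hR0, hm2, hl2]
  have h1κ : (0:ℝ) < 1 - κ := by linarith
  have hd1 : p * (1 - κ) ≠ 0 := (mul_pos hp h1κ).ne'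
  field_simp
  ring

lemma Vf_hasDerivAt (hm : 0 < m) (ha : 0 < a) (hℓ : 0 < ℓ) (θ : ℝ) :
    HasDerivAt (fun θ' : ℝ => Vf m θ' a ℓ)
      ((ℓ / (Rf m θ a ℓ) ^ 3 - m / (2 * (Rf m θ a ℓ) ^ 2)) / a) θ := by
  rcases eq_or_ne θ 0 with rfl | hθ
  · rw [force_value hm ha hℓ]
    exact Vf_hasDerivAt_zero hm ha hℓ
  · exact Vf_hasDerivAt_ne hm ha hℓ hθ

lemma line_hasDerivAt (θ₀ a t : ℝ) : HasDerivAt (fun s : ℝ => θ₀ + a * s) a t := by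
  simpa using ((hasDerivAt_id t).const_mul a).const_add θ₀

lemma Rt_hasDerivAt (hm : 0 < m) (ha : 0 < a) (hℓ : 0 < ℓ) (θ₀ t : ℝ) :
    HasDerivAt (fun s : ℝ => Rf m (θ₀ + a * s) a ℓ) (Vf m (θ₀ + a * t) a ℓ) t := by
  have h := (Rf_hasDerivAt hm ha hℓ (θ₀ + a * t)).comp t (line_hasDerivAt θ₀ a t)
  rw [div_mul_cancel₀ _ ha.ne'] at h
  exact h

lemma Vt_hasDerivAt (hm : 0 < m) (ha : 0 < a) (hℓ : 0 < ℓ) (θ₀ t : ℝ) :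
    HasDerivAt (fun s : ℝ => Vf m (θ₀ + a * s) a ℓ)
      (ℓ / (Rf m (θ₀ + a * t) a ℓ) ^ 3 - m / (2 * (Rf m (θ₀ + a * t) a ℓ) ^ 2)) t := by
  have h := (Vf_hasDerivAt hm ha hℓ (θ₀ + a * t)).comp t (line_hasDerivAt θ₀ a t)
  rw [div_mul_cancel₀ _ ha.ne'] at h
  exact h

end K


/-- the linearized (Kepler) characteristics.  For every `a>0`, `ℓ>0`, `θ₀∈ℝ`, the
curve `t ↦ (R(θ₀+at,a,ℓ), V(θ₀+at,a,ℓ))` is C¹, stays in `r > 0`, solves the Kepler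
characteristic system, and satisfies the energy identity. -/
theorem statement0 (m : ℝ) (hm : 0 < m) (a ℓ θ₀ : ℝ) (ha : 0 < a) (hℓ : 0 < ℓ) :
    (ContDiff ℝ 1 fun t : ℝ => Rf m (θ₀ + a * t) a ℓ) ∧
    (ContDiff ℝ 1 fun t : ℝ => Vf m (θ₀ + a * t) a ℓ) ∧
    ∀ t : ℝ,
      0 < Rf m (θ₀ + a * t) a ℓ ∧
      HasDerivAt (fun s : ℝ => Rf m (θ₀ + a * s) a ℓ) (Vf m (θ₀ + a * t) a ℓ) t ∧
      HasDerivAt (fun s : ℝ => Vf m (θ₀ + a * s) a ℓ)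
        (ℓ / (Rf m (θ₀ + a * t) a ℓ) ^ 3 - m / (2 * (Rf m (θ₀ + a * t) a ℓ) ^ 2)) t ∧
      (Vf m (θ₀ + a * t) a ℓ) ^ 2 - m / Rf m (θ₀ + a * t) a ℓ
          + ℓ / (Rf m (θ₀ + a * t) a ℓ) ^ 2 = a ^ 2 := by
  have hRdiff : Differentiable ℝ fun t : ℝ => Rf m (θ₀ + a * t) a ℓ :=
    fun t => (K.Rt_hasDerivAt hm ha hℓ θ₀ t).differentiableAt
  have hVdiff : Differentiable ℝ fun t : ℝ => Vf m (θ₀ + a * t) a ℓ :=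
    fun t => (K.Vt_hasDerivAt hm ha hℓ θ₀ t).differentiableAt
  have hRderiv : deriv (fun t : ℝ => Rf m (θ₀ + a * t) a ℓ)
      = fun t : ℝ => Vf m (θ₀ + a * t) a ℓ := by
    funext t
    exact (K.Rt_hasDerivAt hm ha hℓ θ₀ t).deriv
  have hVderiv : deriv (fun t : ℝ => Vf m (θ₀ + a * t) a ℓ)
      = fun t : ℝ => ℓ / (Rf m (θ₀ + a * t) a ℓ) ^ 3
          - m / (2 * (Rf m (θ₀ + a * t) a ℓ) ^ 2) := by
    funext t
    exact (K.Vt_hasDerivAt hm ha hℓ θ₀ t).deriv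
  have hRcont : Continuous fun t : ℝ => Rf m (θ₀ + a * t) a ℓ := hRdiff.continuous
  have hRpos : ∀ t : ℝ, 0 < Rf m (θ₀ + a * t) a ℓ := fun t => K.Rf_pos hm ha hℓ _
  refine ⟨?_, ?_, ?_⟩
  · rw [contDiff_one_iff_deriv]
    exact ⟨hRdiff, by rw [hRderiv]; exact hVdiff.continuous⟩
  · rw [contDiff_one_iff_deriv]
    refine ⟨hVdiff, ?_⟩
    rw [hVderiv]
    apply Continuous.sub
    · exact continuous_const.div (hRcont.pow 3) fun t => pow_ne_zero 3 (hRpos t).ne'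
    · exact continuous_const.div (continuous_const.mul (hRcont.pow 2))
        fun t => mul_ne_zero two_ne_zero (pow_ne_zero 2 (hRpos t).ne')
  · intro t
    exact ⟨hRpos t, K.Rt_hasDerivAt hm ha hℓ θ₀ t, K.Vt_hasDerivAt hm ha hℓ θ₀ t,
      K.energy hm ha hℓ _⟩
end
end

section
/- For each ℓ>0, the map (θ,a) ↦ (R(θ,a,ℓ), V(θ,a,ℓ)) is a bijection from ℝ×(0,∞) onto the domain D_ℓ := {(r,v) ∈ (0,∞)×ℝ : v² − m/r + ℓ/r² > 0}, and its inverse is the map (r,v) ↦ (Θ(r,v,ℓ), 𝒜(r,v,ℓ)), where 𝒜(r,v,ℓ) := √(v² − m/r + ℓ/r²) and Θ(r,v,ℓ) := sgn(v)·p(𝒜,ℓ)·G_{κ(𝒜,ℓ)}(r/p(𝒜,ℓ) + κ(𝒜,ℓ)) with 𝒜 = 𝒜(r,v,ℓ). (Here Θ is well defined since r/p(𝒜,ℓ) + κ(𝒜,ℓ) ≥ 1 for every (r,v) ∈ D_ℓ.) -/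
noncomputable section

open Real MeasureTheory Set Filter

lemma Gf_one (κ : ℝ) : Gf κ 1 = 0 := by simp [Gf]

lemma Gf_contOn (κ : ℝ) : ContinuousOn (Gf κ) (Ici 1) := by
  have h1 : Continuous fun y : ℝ => Real.sqrt (y ^ 2 - 1) :=
    Real.continuous_sqrt.comp (by continuity)
  apply ContinuousOn.sub h1.continuousOn
  apply ContinuousOn.mul continuousOn_const
  apply ContinuousOn.log ((continuous_id.add h1).continuousOn)
  intro y hy
  have h2 : (1:ℝ) ≤ y := hy
  have := Real.sqrt_nonneg (y ^ 2 - 1)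
  intro h; have h' : y + Real.sqrt (y ^ 2 - 1) = 0 := h; nlinarith

lemma Gf_hasDeriv {κ y : ℝ} (hy : 1 < y) :
    HasDerivAt (Gf κ) ((y - κ) / Real.sqrt (y ^ 2 - 1)) y := by
  have hy2 : (0:ℝ) < y ^ 2 - 1 := by nlinarith
  have hs0 : 0 < Real.sqrt (y ^ 2 - 1) := Real.sqrt_pos.2 hy2
  set s := Real.sqrt (y ^ 2 - 1) with hs
  have hsq : s ^ 2 = y ^ 2 - 1 := Real.sq_sqrt hy2.le
  have h1 : HasDerivAt (fun y : ℝ => y ^ 2 - 1) (2 * y) y := by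
    simpa using (hasDerivAt_pow 2 y).sub_const 1
  have h2 : HasDerivAt (fun y : ℝ => Real.sqrt (y ^ 2 - 1)) (y / s) y := by
    have := (Real.hasDerivAt_sqrt (ne_of_gt hy2)).comp y h1
    refine this.congr_deriv ?_
    rw [← hs]
    field_simp
  have h3 : HasDerivAt (fun y : ℝ => y + Real.sqrt (y ^ 2 - 1)) (1 + y / s) y :=
    (hasDerivAt_id y).add h2
  have hpos : (0:ℝ) < y + s := by nlinarith
  have h4 := (h3.log (ne_of_gt hpos)).const_mul κ
  have h5 := h2.sub h4
  refine h5.congr_deriv ?_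
  rw [← hs]
  have h6 : (1 + y / s) / (y + s) = 1 / s := by
    rw [div_eq_div_iff (ne_of_gt hpos) (ne_of_gt hs0)]
    field_simp
    ring
  rw [h6]
  ring

lemma Gf_strictMono {κ : ℝ} (hκ : κ < 1) : StrictMonoOn (Gf κ) (Ici 1) := by
  apply strictMonoOn_of_deriv_pos (convex_Ici 1) (Gf_contOn κ)
  intro y hy
  rw [interior_Ici] at hy
  have hy1 : 1 < y := hy
  rw [(Gf_hasDeriv hy1).deriv]
  have hs : 0 < Real.sqrt (y ^ 2 - 1) := Real.sqrt_pos.2 (by nlinarith)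
  exact div_pos (by linarith) hs

lemma Gf_cosh (κ : ℝ) {t : ℝ} (ht : 0 ≤ t) :
    Gf κ (Real.cosh t) = Real.sinh t - κ * t := by
  unfold Gf
  rw [show Real.cosh t ^ 2 - 1 = Real.sinh t ^ 2 by rw [Real.cosh_sq]; ring,
    Real.sqrt_sq (Real.sinh_nonneg_iff.2 ht), Real.cosh_add_sinh, Real.log_exp]

lemma Gf_exists' {κ : ℝ} (hκ : κ < 1) {x : ℝ} (hx : 0 ≤ x) :
    ∃ y ∈ Ici (1:ℝ), Gf κ y = x := by
  set t : ℝ := 4 * x + 4 with htdef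
  have ht0 : (0:ℝ) ≤ t := by linarith
  have hexp : (1 + t / 2) ^ 2 ≤ Real.exp t := by
    have h := Real.add_one_le_exp (t / 2)
    have h2 : Real.exp (t / 2) ^ 2 = Real.exp t := by
      rw [sq, ← Real.exp_add]
      norm_num
    nlinarith [Real.exp_pos (t / 2)]
  have hexpneg : Real.exp (-t) ≤ 1 := Real.exp_le_one_iff.2 (by linarith)
  have hsinh : t / 2 + t ^ 2 / 8 ≤ Real.sinh t := by
    rw [Real.sinh_eq]
    nlinarith
  have hbig : x ≤ Gf κ (Real.cosh t) := by
    rw [Gf_cosh κ ht0]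
    have hκt : κ * t ≤ t := by nlinarith
    nlinarith
  have h1 : (1:ℝ) ≤ Real.cosh t := Real.one_le_cosh t
  have hIVT := intermediate_value_Icc h1 ((Gf_contOn κ).mono (Icc_subset_Ici_self))
  have hx' : x ∈ Icc (Gf κ 1) (Gf κ (Real.cosh t)) := by
    rw [Gf_one]; exact ⟨hx, hbig⟩
  obtain ⟨y, hy, hyx⟩ := hIVT hx'
  exact ⟨y, Icc_subset_Ici_self hy, hyx⟩

lemma Hf_mem {κ x : ℝ} (hκ : κ < 1) (hx : 0 ≤ x) : 1 ≤ Hf κ x :=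
  Function.invFunOn_mem (f := Gf κ) (s := Ici 1) (Gf_exists' hκ hx)

lemma Gf_Hf {κ x : ℝ} (hκ : κ < 1) (hx : 0 ≤ x) : Gf κ (Hf κ x) = x :=
  Function.invFunOn_eq (f := Gf κ) (s := Ici 1) (Gf_exists' hκ hx)

lemma Hf_Gf {κ y : ℝ} (hκ : κ < 1) (hy : 1 ≤ y) : Hf κ (Gf κ y) = y :=
  (Gf_strictMono hκ).injOn.leftInvOn_invFunOn hy

lemma Hf_zero {κ : ℝ} (hκ : κ < 1) : Hf κ 0 = 1 := by
  rw [← Gf_one κ]; exact Hf_Gf hκ le_rfl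

lemma sign_mul_abs' (x : ℝ) : Real.sign x * |x| = x := by
  rcases lt_trichotomy x 0 with h | h | h
  · rw [Real.sign_of_neg h, abs_of_neg h]; ring
  · simp [h]
  · rw [Real.sign_of_pos h, abs_of_pos h]; ring

lemma param {m a ℓ : ℝ} (hm : 0 < m) (ha : 0 < a) (hℓ : 0 < ℓ) :
    0 < kpa m a ℓ ∧ kpa m a ℓ < 1 ∧ 0 < pfn m a ℓ ∧
    m = 2 * a ^ 2 * kpa m a ℓ * pfn m a ℓ ∧
    ℓ = a ^ 2 * pfn m a ℓ ^ 2 * (1 - kpa m a ℓ ^ 2) := by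
  have hc : (0:ℝ) < 4 * a ^ 2 * ℓ / m ^ 2 := by positivity
  have hS0 : (0:ℝ) < Real.sqrt (1 + 4 * a ^ 2 * ℓ / m ^ 2) := Real.sqrt_pos.2 (by linarith)
  have hS2 : Real.sqrt (1 + 4 * a ^ 2 * ℓ / m ^ 2) ^ 2 = 1 + 4 * a ^ 2 * ℓ / m ^ 2 :=
    Real.sq_sqrt (by linarith)
  have hS1 : (1:ℝ) < Real.sqrt (1 + 4 * a ^ 2 * ℓ / m ^ 2) := by nlinarith
  have hκ0 : 0 < kpa m a ℓ := by rw [kpa]; positivity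
  have hκ1 : kpa m a ℓ < 1 := by
    rw [kpa]; rw [div_lt_one hS0]; exact hS1
  have hp0 : 0 < pfn m a ℓ := by
    rw [pfn]; exact div_pos hm (by positivity)
  have hκsq : kpa m a ℓ ^ 2 * (m ^ 2 + 4 * a ^ 2 * ℓ) = m ^ 2 := by
    rw [kpa, div_pow, one_pow, hS2]
    field_simp
  have hmId : m = 2 * a ^ 2 * kpa m a ℓ * pfn m a ℓ := by
    rw [pfn]
    field_simp
  have hℓId : ℓ = a ^ 2 * pfn m a ℓ ^ 2 * (1 - kpa m a ℓ ^ 2) := by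
    rw [pfn]
    have hκ' : kpa m a ℓ ≠ 0 := ne_of_gt hκ0
    have ha' : a ≠ 0 := ne_of_gt ha
    field_simp
    nlinarith [hκsq]
  exact ⟨hκ0, hκ1, hp0, hmId, hℓId⟩

lemma quadId {m a ℓ κ p R : ℝ} (hp : p ≠ 0) (hmId : m = 2 * a ^ 2 * κ * p)
    (hℓId : ℓ = a ^ 2 * p ^ 2 * (1 - κ ^ 2)) :
    a ^ 2 * R ^ 2 + m * R - ℓ = a ^ 2 * p ^ 2 * ((R / p + κ) ^ 2 - 1) := by
  rw [hmId, hℓId]; field_simp; ring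

lemma key_fwd {m ℓ : ℝ} (hm : 0 < m) (hℓ : 0 < ℓ) (θ : ℝ) {a : ℝ} (ha : 0 < a) :
    0 < Rf m θ a ℓ ∧
    0 < (Vf m θ a ℓ) ^ 2 - m / Rf m θ a ℓ + ℓ / (Rf m θ a ℓ) ^ 2 ∧
    Acal m (Rf m θ a ℓ) (Vf m θ a ℓ) ℓ = a ∧
    Theta m (Rf m θ a ℓ) (Vf m θ a ℓ) ℓ = θ := by
  obtain ⟨hκ0, hκ1, hp0, hmId, hℓId⟩ := param hm ha hℓ
  set κ := kpa m a ℓ with hκdef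
  set p := pfn m a ℓ with hpdef
  have hx : 0 ≤ |θ| / p := by positivity
  set y := Hf κ (|θ| / p) with hydef
  have hy1 : 1 ≤ y := Hf_mem hκ1 hx
  have hGy : Gf κ y = |θ| / p := Gf_Hf hκ1 hx
  have hR : Rf m θ a ℓ = p * y - p * κ := rfl
  set R := Rf m θ a ℓ with hRdef
  have hR0 : 0 < R := by rw [hR]; nlinarith
  clear_value κ p y R
  have hyR : R / p + κ = y := by rw [hR]; field_simp; ring
  have hquad : a ^ 2 * R ^ 2 + m * R - ℓ = a ^ 2 * p ^ 2 * (y ^ 2 - 1) := by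
    rw [← hyR]; exact quadId (ne_of_gt hp0) hmId hℓId
  have ha' : a ≠ 0 := ne_of_gt ha
  have hR' : R ≠ 0 := ne_of_gt hR0
  have harg : 1 + m / (a ^ 2 * R) - ℓ / (a ^ 2 * R ^ 2) = p ^ 2 * (y ^ 2 - 1) / R ^ 2 := by
    have h1 : 1 + m / (a ^ 2 * R) - ℓ / (a ^ 2 * R ^ 2)
        = (a ^ 2 * R ^ 2 + m * R - ℓ) / (a ^ 2 * R ^ 2) := by
      field_simp
    rw [h1, hquad, show a ^ 2 * p ^ 2 * (y ^ 2 - 1) = a ^ 2 * (p ^ 2 * (y ^ 2 - 1)) by ring,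
      mul_div_mul_left _ _ (pow_ne_zero 2 ha')]
  have hysq : 0 ≤ y ^ 2 - 1 := by nlinarith
  have hsq_y : Real.sqrt (y ^ 2 - 1) ^ 2 = y ^ 2 - 1 := Real.sq_sqrt hysq
  have hsqrt : Real.sqrt (1 + m / (a ^ 2 * R) - ℓ / (a ^ 2 * R ^ 2))
      = p * Real.sqrt (y ^ 2 - 1) / R := by
    rw [harg, show p ^ 2 * (y ^ 2 - 1) / R ^ 2 = (p / R) ^ 2 * (y ^ 2 - 1) by ring,
      Real.sqrt_mul (by positivity) _, Real.sqrt_sq (by positivity : (0:ℝ) ≤ p / R)]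
    ring
  have hV : Vf m θ a ℓ = Real.sign θ * (a * (p * Real.sqrt (y ^ 2 - 1) / R)) := by
    rw [Vf, ← hRdef, hsqrt]; ring
  have hV2 : (Vf m θ a ℓ) ^ 2 = a ^ 2 * p ^ 2 * (y ^ 2 - 1) / R ^ 2 := by
    rcases eq_or_ne θ 0 with h0 | h0
    · have hy1' : y = 1 := by
        rw [hydef, h0]
        simpa using Hf_zero hκ1
      rw [hV, h0, Real.sign_zero, hy1']
      norm_num
    · have hsgn : (Real.sign θ) ^ 2 = 1 := by
        rcases Real.sign_apply_eq_of_ne_zero θ h0 with h | h <;> rw [h] <;> norm_num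
      rw [hV, mul_pow, hsgn, one_mul, mul_pow, div_pow, mul_pow, hsq_y]
      ring
  have hAval : (Vf m θ a ℓ) ^ 2 - m / R + ℓ / R ^ 2 = a ^ 2 := by
    rw [hV2]
    have h1 : a ^ 2 * p ^ 2 * (y ^ 2 - 1) / R ^ 2 - m / R + ℓ / R ^ 2
        = (a ^ 2 * p ^ 2 * (y ^ 2 - 1) - m * R + ℓ) / R ^ 2 := by
      field_simp
    rw [h1, ← hquad, show a ^ 2 * R ^ 2 + m * R - ℓ - m * R + ℓ = a ^ 2 * R ^ 2 by ring,
      mul_div_assoc, div_self (pow_ne_zero 2 hR'), mul_one]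
  have hApos : 0 < (Vf m θ a ℓ) ^ 2 - m / R + ℓ / R ^ 2 := by
    rw [hAval]; positivity
  have hAcal : Acal m R (Vf m θ a ℓ) ℓ = a := by
    rw [Acal, hAval, Real.sqrt_sq ha.le]
  refine ⟨hR0, hApos, hAcal, ?_⟩
  have hTh : Theta m R (Vf m θ a ℓ) ℓ = Real.sign (Vf m θ a ℓ) * |θ| := by
    rw [Theta, hAcal, ← hκdef, ← hpdef, hyR, hGy]
    field_simp
  rw [hTh]
  rcases eq_or_ne θ 0 with h0 | h0
  · rw [h0]; simp
  · have hyy : 1 < y := by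
      rcases lt_or_eq_of_le hy1 with h | h
      · exact h
      · exfalso
        have : Gf κ y = 0 := by rw [← h, Gf_one]
        rw [hGy] at this
        have : |θ| = 0 := by
          field_simp at this
          simpa using this
        exact h0 (abs_eq_zero.1 this)
    have hspos : 0 < Real.sqrt (y ^ 2 - 1) := Real.sqrt_pos.2 (by nlinarith)
    have hcpos : 0 < a * (p * Real.sqrt (y ^ 2 - 1) / R) := by positivity
    have hsgnV : Real.sign (Vf m θ a ℓ) = Real.sign θ := by
      rcases lt_trichotomy θ 0 with h | h | h
      · have hVneg : Vf m θ a ℓ < 0 := by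
          rw [hV, Real.sign_of_neg h]
          linarith [hcpos]
        rw [Real.sign_of_neg hVneg, Real.sign_of_neg h]
      · exact absurd h h0
      · have hVpos : 0 < Vf m θ a ℓ := by
          rw [hV, Real.sign_of_pos h]
          linarith [hcpos]
        rw [Real.sign_of_pos hVpos, Real.sign_of_pos h]
    rw [hsgnV, sign_mul_abs']

lemma key_bwd {m ℓ : ℝ} (hm : 0 < m) (hℓ : 0 < ℓ) {r v : ℝ} (hr : 0 < r)
    (hD : 0 < v ^ 2 - m / r + ℓ / r ^ 2) :
    0 < Acal m r v ℓ ∧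
    1 ≤ r / pfn m (Acal m r v ℓ) ℓ + kpa m (Acal m r v ℓ) ℓ ∧
    Rf m (Theta m r v ℓ) (Acal m r v ℓ) ℓ = r ∧
    Vf m (Theta m r v ℓ) (Acal m r v ℓ) ℓ = v := by
  have hA0 : 0 < Acal m r v ℓ := Real.sqrt_pos.2 hD
  have hA2 : (Acal m r v ℓ) ^ 2 = v ^ 2 - m / r + ℓ / r ^ 2 := Real.sq_sqrt hD.le
  set A := Acal m r v ℓ with hAdef
  obtain ⟨hκ0, hκ1, hp0, hmId, hℓId⟩ := param hm hA0 hℓ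
  set κ := kpa m A ℓ with hκdef
  set p := pfn m A ℓ with hpdef
  set y := r / p + κ with hydef
  clear_value A κ p y
  have hr' : r ≠ 0 := ne_of_gt hr
  have hA' : A ≠ 0 := ne_of_gt hA0
  have hquad2 : A ^ 2 * r ^ 2 + m * r - ℓ = v ^ 2 * r ^ 2 := by
    rw [hA2]; field_simp; ring
  have hquad : A ^ 2 * p ^ 2 * (y ^ 2 - 1) = v ^ 2 * r ^ 2 := by
    rw [hydef, ← quadId (ne_of_gt hp0) hmId hℓId]
    exact hquad2
  have hy0 : 0 < y := by
    rw [hydef]; exact add_pos (div_pos hr hp0) hκ0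
  have hApp : 0 < A ^ 2 * p ^ 2 := by positivity
  have hy2 : 0 ≤ y ^ 2 - 1 := by nlinarith [sq_nonneg (v * r)]
  have hy1 : 1 ≤ y := by nlinarith
  have hTheta : Theta m r v ℓ = Real.sign v * (p * Gf κ y) := by
    rw [Theta, ← hAdef, ← hκdef, ← hpdef, ← hydef]; ring
  refine ⟨hA0, hy1, ?_⟩
  rcases eq_or_ne v 0 with h0 | h0
  · have h4 : A ^ 2 * p ^ 2 * (y ^ 2 - 1) = 0 := by rw [hquad, h0]; ring
    have h3 : y ^ 2 - 1 = 0 := (mul_eq_zero.1 h4).resolve_left (ne_of_gt hApp)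
    have hyeq : y = 1 := by nlinarith [h3, hy0]
    have hreq : r = p * (1 - κ) := by
      have h1 : r / p + κ = 1 := by rw [← hydef, hyeq]
      field_simp at h1
      linear_combination h1
    have hT0 : Theta m r v ℓ = 0 := by rw [hTheta, h0, Real.sign_zero, zero_mul]
    constructor
    · rw [hT0, Rf, ← hκdef, ← hpdef]
      simp only [abs_zero, zero_div]
      rw [Hf_zero hκ1, hreq]
      ring
    · rw [hT0, Vf, Real.sign_zero, h0, zero_mul, zero_mul]
  · have hvr : 0 < v ^ 2 * r ^ 2 := by positivity
    have hyy : 1 < y := by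
      rcases lt_or_eq_of_le hy1 with h | h
      · exact h
      · exfalso
        rw [← h] at hquad
        have hz : A ^ 2 * p ^ 2 * ((1:ℝ) ^ 2 - 1) = 0 := by ring
        rw [hz] at hquad
        linarith [hvr]
    have hG0 : 0 < Gf κ y := by
      have := Gf_strictMono hκ1 (self_mem_Ici) (mem_Ici.2 hy1) hyy
      rwa [Gf_one] at this
    have hc : 0 < p * Gf κ y := mul_pos hp0 hG0
    have habs : |Theta m r v ℓ| = p * Gf κ y := by
      rcases Real.sign_apply_eq_of_ne_zero v h0 with h | h <;> rw [hTheta, h]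
      · rw [neg_one_mul, abs_neg, abs_of_pos hc]
      · rw [one_mul, abs_of_pos hc]
    have hHf : Hf κ (|Theta m r v ℓ| / p) = y := by
      rw [habs, mul_div_cancel_left₀ _ (ne_of_gt hp0)]
      exact Hf_Gf hκ1 hy1
    have hRf : Rf m (Theta m r v ℓ) A ℓ = r := by
      rw [Rf, ← hκdef, ← hpdef, hHf, hydef]
      field_simp
      ring
    refine ⟨hRf, ?_⟩
    have harg : 1 + m / (A ^ 2 * r) - ℓ / (A ^ 2 * r ^ 2) = v ^ 2 / A ^ 2 := by
      have h1 : 1 + m / (A ^ 2 * r) - ℓ / (A ^ 2 * r ^ 2)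
          = (A ^ 2 * r ^ 2 + m * r - ℓ) / (A ^ 2 * r ^ 2) := by
        field_simp
      rw [h1, hquad2, show v ^ 2 * r ^ 2 = r ^ 2 * v ^ 2 by ring,
        show A ^ 2 * r ^ 2 = r ^ 2 * A ^ 2 by ring,
        mul_div_mul_left _ _ (pow_ne_zero 2 hr')]
    have hsqrt : Real.sqrt (1 + m / (A ^ 2 * r) - ℓ / (A ^ 2 * r ^ 2)) = |v| / A := by
      rw [harg, show v ^ 2 / A ^ 2 = (v / A) ^ 2 by ring, Real.sqrt_sq_eq_abs, abs_div,
        abs_of_pos hA0]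
    have hsgnT : Real.sign (Theta m r v ℓ) = Real.sign v := by
      rcases lt_trichotomy v 0 with h | h | h
      · have hTneg : Theta m r v ℓ < 0 := by
          rw [hTheta, Real.sign_of_neg h]
          linarith [hc]
        rw [Real.sign_of_neg hTneg, Real.sign_of_neg h]
      · exact absurd h h0
      · have hTpos : 0 < Theta m r v ℓ := by
          rw [hTheta, Real.sign_of_pos h]
          linarith [hc]
        rw [Real.sign_of_pos hTpos, Real.sign_of_pos h]
    rw [Vf, hRf, hsqrt, hsgnT]
    have hAA : A * (|v| / A) = |v| := by field_simp
    rw [mul_assoc, hAA, sign_mul_abs']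


/-- for each `ℓ>0`, `(θ,a) ↦ (R(θ,a,ℓ),V(θ,a,ℓ))` is a bijection from
`ℝ×(0,∞)` onto `D_ℓ = {(r,v) : r>0, v²-m/r+ℓ/r²>0}` with inverse `(Θ,𝒜)`. -/
theorem statement1 (m : ℝ) (hm : 0 < m) (ℓ : ℝ) (hℓ : 0 < ℓ) :
    Set.BijOn (fun q : ℝ × ℝ => (Rf m q.1 q.2 ℓ, Vf m q.1 q.2 ℓ))
      (Set.univ ×ˢ Set.Ioi 0)
      {p : ℝ × ℝ | 0 < p.1 ∧ 0 < p.2 ^ 2 - m / p.1 + ℓ / p.1 ^ 2} ∧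
    (∀ p : ℝ × ℝ, (0 < p.1 ∧ 0 < p.2 ^ 2 - m / p.1 + ℓ / p.1 ^ 2) →
      1 ≤ p.1 / pfn m (Acal m p.1 p.2 ℓ) ℓ + kpa m (Acal m p.1 p.2 ℓ) ℓ) ∧
    (∀ q : ℝ × ℝ, q ∈ (Set.univ ×ˢ Set.Ioi 0 : Set (ℝ × ℝ)) →
      (Theta m (Rf m q.1 q.2 ℓ) (Vf m q.1 q.2 ℓ) ℓ,
        Acal m (Rf m q.1 q.2 ℓ) (Vf m q.1 q.2 ℓ) ℓ) = q) ∧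
    (∀ p : ℝ × ℝ, (0 < p.1 ∧ 0 < p.2 ^ 2 - m / p.1 + ℓ / p.1 ^ 2) →
      (Rf m (Theta m p.1 p.2 ℓ) (Acal m p.1 p.2 ℓ) ℓ,
       Vf m (Theta m p.1 p.2 ℓ) (Acal m p.1 p.2 ℓ) ℓ) = p) := by
  constructor
  · apply Set.InvOn.bijOn (f' := fun p : ℝ × ℝ => (Theta m p.1 p.2 ℓ, Acal m p.1 p.2 ℓ))
    · constructor
      · intro q hq
        obtain ⟨_, _, hA, hT⟩ := key_fwd hm hℓ q.1 (Set.mem_prod.1 hq).2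
        simp only
        rw [hT, hA]
      · intro pt hpt
        obtain ⟨_, _, hR, hV⟩ := key_bwd hm hℓ hpt.1 hpt.2
        simp only
        rw [hR, hV]
    · intro q hq
      obtain ⟨h1, h2, _, _⟩ := key_fwd hm hℓ q.1 (Set.mem_prod.1 hq).2
      exact ⟨h1, h2⟩
    · intro pt hpt
      obtain ⟨hA, _, _, _⟩ := key_bwd hm hℓ hpt.1 hpt.2
      exact ⟨trivial, hA⟩
  refine ⟨?_, ?_, ?_⟩
  · intro pt hpt
    exact (key_bwd hm hℓ hpt.1 hpt.2).2.1
  · intro q hq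
    obtain ⟨_, _, hA, hT⟩ := key_fwd hm hℓ q.1 (Set.mem_prod.1 hq).2
    rw [hT, hA]
  · intro pt hpt
    obtain ⟨_, _, hR, hV⟩ := key_bwd hm hℓ hpt.1 hpt.2
    rw [hR, hV]
end
end

section
/- For every κ∈(0,1), the function G_κ is a strictly increasing bijection of [1,∞) onto [0,∞); its inverse H_κ : [0,∞) → [1,∞) is infinitely differentiable and satisfies: (i) (H_κ(x) − 1 − x²/(2(1−κ)²))·(1−κ)²/x² → 0 as x → 0⁺; (ii) there exists a constant C_κ > 0 such that |H_κ(x) − x − κ·ln x − κ²·(ln x)/x| ≤ C_κ for all x ≥ 2. -/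
noncomputable section

open Real MeasureTheory Set Filter

private lemma log_le_half {z : ℝ} (hz : 1 ≤ z) : Real.log z ≤ z / 2 := by
  have h0 : (0:ℝ) < z := by linarith
  have hr : Real.sqrt z ^ 2 = z := Real.sq_sqrt h0.le
  have hr0 : 0 ≤ Real.sqrt z := Real.sqrt_nonneg z
  have hr1 : (0:ℝ) < Real.sqrt z := Real.sqrt_pos.mpr h0
  have hlog : Real.log (Real.sqrt z) ≤ Real.sqrt z - 1 :=
    Real.log_le_sub_one_of_pos hr1
  have h2 : Real.log z = 2 * Real.log (Real.sqrt z) := by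
    rw [Real.log_sqrt h0.le]; ring
  nlinarith [sq_nonneg (Real.sqrt z - 2)]

set_option maxHeartbeats 3200000

/-- `G_κ` is a strictly increasing bijection of `[1,∞)` onto `[0,∞)`; its inverse
`H_κ` is smooth and has the stated asymptotics at `0⁺` and at `∞`. -/
theorem statement4 (κ : ℝ) (hκ : κ ∈ Set.Ioo (0 : ℝ) 1) :
    StrictMonoOn (Gf κ) (Set.Ici 1) ∧
    Set.BijOn (Gf κ) (Set.Ici 1) (Set.Ici 0) ∧
    (∀ n : ℕ, ContDiffOn ℝ n (Hf κ) (Set.Ici 0)) ∧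
    Filter.Tendsto
      (fun x : ℝ => (Hf κ x - 1 - x ^ 2 / (2 * (1 - κ) ^ 2)) * (1 - κ) ^ 2 / x ^ 2)
      (nhdsWithin 0 (Set.Ioi 0)) (nhds 0) ∧
    ∃ Cκ : ℝ, 0 < Cκ ∧ ∀ x : ℝ, 2 ≤ x →
      |Hf κ x - x - κ * Real.log x - κ ^ 2 * Real.log x / x| ≤ Cκ := by

  obtain ⟨hκ0, hκ1⟩ := hκ
  have h1κ : (0:ℝ) < 1 - κ := by linarith
  -- the substitution function φ s = sinh s - κ s
  set φ : ℝ → ℝ := fun s => Real.sinh s - κ * s with hφdef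
  have hφd : ∀ s, HasDerivAt φ (Real.cosh s - κ) s := by
    intro s
    exact ((Real.hasDerivAt_sinh s).sub ((hasDerivAt_id s).const_mul κ)).congr_deriv (by simp)
  have hφpos : ∀ s, (0:ℝ) < Real.cosh s - κ := fun s => by
    nlinarith [Real.one_le_cosh s]
  have hφmono : StrictMono φ :=
    strictMono_of_deriv_pos fun s => by rw [(hφd s).deriv]; exact hφpos s
  have hφcont : Continuous φ := Real.continuous_sinh.sub (continuous_const.mul continuous_id)
  have hφtop : Tendsto φ atTop atTop := by
    apply tendsto_atTop_mono' atTop ?_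
      (Tendsto.const_mul_atTop h1κ tendsto_id : Tendsto (fun s : ℝ => (1 - κ) * s) atTop atTop)
    filter_upwards [eventually_ge_atTop (0:ℝ)] with s hs
    have h := Real.self_le_sinh_iff.mpr hs
    simp only [hφdef]; nlinarith
  have hφbot : Tendsto φ atBot atBot := by
    apply tendsto_atBot_mono' atBot ?_
      (Tendsto.const_mul_atBot h1κ tendsto_id : Tendsto (fun s : ℝ => (1 - κ) * s) atBot atBot)
    filter_upwards [eventually_le_atBot (0:ℝ)] with s hs
    have h := Real.sinh_le_self_iff.mpr hs
    simp only [hφdef]; nlinarith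
  have hφsurj : Function.Surjective φ := hφcont.surjective hφtop hφbot
  have hφinj : Function.Injective φ := hφmono.injective
  set ψ : ℝ → ℝ := Function.invFun φ with hψdef
  have hφψ : ∀ x, φ (ψ x) = x := fun x => Function.invFun_eq (hφsurj x)
  have hψφ : ∀ s, ψ (φ s) = s := fun s => Function.leftInverse_invFun hφinj s
  have hφ0 : φ 0 = 0 := by simp [hφdef]
  have hψ0 : ψ 0 = 0 := by
    have h := hψφ 0
    rwa [hφ0] at h
  have hψnonneg : ∀ x, 0 ≤ x → 0 ≤ ψ x := by
    intro x hx
    by_contra h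
    push_neg at h
    have h2 := hφmono h
    rw [hφψ, hφ0] at h2
    linarith
  -- smoothness of ψ
  have key : ∀ (n : ℕ) (x : ℝ), ContDiffAt ℝ (n+1 : ℕ) ψ x := by
    intro n x
    obtain ⟨a, rfl⟩ := hφsurj x
    have hfa : ContDiffAt ℝ (n+1 : ℕ) φ a :=
      (Real.contDiff_sinh.sub (contDiff_const.mul contDiff_id)).contDiffAt
    have hne : Real.cosh a - κ ≠ 0 := ne_of_gt (hφpos a)
    have hfd := (hφd a).hasFDerivAt_equiv hne
    have h1 : ((n+1 : ℕ) : WithTop ℕ∞) ≠ 0 := by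
      exact_mod_cast Nat.succ_ne_zero n
    have hinv := hfa.to_localInverse (f' := ContinuousLinearEquiv.unitsEquivAut ℝ
      (Units.mk0 _ hne)) hfd h1
    apply hinv.congr_of_eventuallyEq
    have hev := (hfa.hasStrictFDerivAt' hfd h1).eventually_right_inverse
    filter_upwards [hev] with y hy
    conv_lhs => rw [← hy]
    rw [hψφ]
    rfl
  have hψcont : Continuous ψ :=
    continuous_iff_continuousAt.mpr fun x => (key 0 x).continuousAt
  -- derivative of ψ at 0
  have hψd0 : HasDerivAt ψ (1 - κ)⁻¹ 0 := by
    have h := HasDerivAt.of_local_left_inverse hψcont.continuousAt (hφd (ψ 0))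
      (ne_of_gt (hφpos (ψ 0))) (Filter.Eventually.of_forall hφψ)
    simpa [hψ0, Real.cosh_zero] using h
  -- G ∘ cosh = φ
  have hGcosh : ∀ s : ℝ, 0 ≤ s → Gf κ (Real.cosh s) = φ s := by
    intro s hs
    have h1 : Real.cosh s ^ 2 - 1 = Real.sinh s ^ 2 := by nlinarith [Real.cosh_sq s]
    have h2 : Real.sqrt (Real.cosh s ^ 2 - 1) = Real.sinh s := by
      rw [h1, Real.sqrt_sq (Real.sinh_nonneg_iff.mpr hs)]
    show Real.sqrt (Real.cosh s ^ 2 - 1)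
        - κ * Real.log (Real.cosh s + Real.sqrt (Real.cosh s ^ 2 - 1)) = φ s
    rw [h2, Real.cosh_add_sinh, Real.log_exp]
  -- cosh is onto [1, ∞)
  have hcosh_surj : ∀ y : ℝ, 1 ≤ y → ∃ s, 0 ≤ s ∧ Real.cosh s = y := by
    intro y hy
    have h2y : (0:ℝ) ≤ 2*y := by linarith
    have hyc : y ≤ Real.cosh (2*y) := by
      have h1 : 2*y ≤ Real.sinh (2*y) := Real.self_le_sinh_iff.mpr h2y
      nlinarith [Real.cosh_sub_sinh (2*y), Real.exp_pos (-(2*y))]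
    have hsub := intermediate_value_Icc h2y Real.continuous_cosh.continuousOn
    have hmem : y ∈ Set.Icc (Real.cosh 0) (Real.cosh (2*y)) := by
      rw [Real.cosh_zero]; exact ⟨hy, hyc⟩
    obtain ⟨s, hsmem, hcs⟩ := hsub hmem
    exact ⟨s, hsmem.1, hcs⟩
  -- Part 1: strict monotonicity
  have P1 : StrictMonoOn (Gf κ) (Set.Ici 1) := by
    intro y₁ h₁ y₂ h₂ hlt
    obtain ⟨s₁, hs₁, rfl⟩ := hcosh_surj y₁ h₁
    obtain ⟨s₂, hs₂, rfl⟩ := hcosh_surj y₂ h₂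
    rw [hGcosh s₁ hs₁, hGcosh s₂ hs₂]
    apply hφmono
    have h := Real.cosh_lt_cosh.mp hlt
    rwa [abs_of_nonneg hs₁, abs_of_nonneg hs₂] at h
  have hmaps : Set.MapsTo (Gf κ) (Set.Ici 1) (Set.Ici 0) := by
    intro y hy
    obtain ⟨s, hs, rfl⟩ := hcosh_surj y hy
    rw [Set.mem_Ici, hGcosh s hs, ← hφ0]
    exact hφmono.le_iff_le.mpr hs
  have hsurjOn : Set.SurjOn (Gf κ) (Set.Ici 1) (Set.Ici 0) := by
    intro x hx
    exact ⟨Real.cosh (ψ x), Real.one_le_cosh _,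
      by rw [hGcosh _ (hψnonneg x hx), hφψ]⟩
  have P2 : Set.BijOn (Gf κ) (Set.Ici 1) (Set.Ici 0) := ⟨hmaps, P1.injOn, hsurjOn⟩
  -- formula for Hf
  have hHf : ∀ x : ℝ, 0 ≤ x → Hf κ x = Real.cosh (ψ x) := by
    intro x hx
    have hex : ∃ y ∈ Set.Ici (1:ℝ), Gf κ y = x :=
      ⟨Real.cosh (ψ x), Real.one_le_cosh _, by rw [hGcosh _ (hψnonneg x hx), hφψ]⟩
    have hmem : Hf κ x ∈ Set.Ici (1:ℝ) := Function.invFunOn_mem hex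
    have heq : Gf κ (Hf κ x) = x := Function.invFunOn_eq hex
    exact P1.injOn hmem (Real.one_le_cosh _)
      (by rw [heq, hGcosh _ (hψnonneg x hx), hφψ])
  -- Part 3: smoothness
  have P3 : ∀ n : ℕ, ContDiffOn ℝ n (Hf κ) (Set.Ici 0) := by
    intro n
    have hψn : ContDiff ℝ n ψ := by
      rw [contDiff_iff_contDiffAt]
      intro x
      exact (key n x).of_le (by exact_mod_cast Nat.le_succ n)
    have h1 : ContDiff ℝ n (fun x => Real.cosh (ψ x)) := Real.contDiff_cosh.comp hψn
    exact h1.contDiffOn.congr fun x hx => hHf x hx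
  -- Part 4: limit at 0⁺
  set g : ℝ → ℝ := fun x => Real.sinh (ψ x / 2) with hgdef
  have hg0 : g 0 = 0 := by simp [hgdef, hψ0]
  have hgd : HasDerivAt g ((1 - κ)⁻¹ / 2) 0 := by
    have h1 : HasDerivAt (fun x => ψ x / 2) ((1 - κ)⁻¹ / 2) 0 := hψd0.div_const 2
    have h2 := (Real.hasDerivAt_sinh (ψ 0 / 2)).comp 0 h1
    exact h2.congr_deriv (by simp [hψ0])
  have hslope : Tendsto (fun x => g x / x) (nhdsWithin 0 (Set.Ioi 0))
      (nhds ((1 - κ)⁻¹ / 2)) := by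
    have h := hasDerivAt_iff_tendsto_slope.mp hgd
    have h2 := h.mono_left (nhdsWithin_mono 0 (fun y hy => ne_of_gt hy))
    refine h2.congr fun x => ?_
    simp [slope_def_field, hg0]
  have hfin : Tendsto (fun x : ℝ => 2*(g x / x)^2*(1-κ)^2 - 1/2)
      (nhdsWithin 0 (Set.Ioi 0)) (nhds 0) := by
    have hco : Continuous (fun u : ℝ => 2*u^2*(1-κ)^2 - 1/2) := by continuity
    have h1 := (hco.tendsto ((1 - κ)⁻¹ / 2)).comp hslope
    have h2 : 2*((1 - κ)⁻¹/2)^2*(1-κ)^2 - 1/2 = 0 := by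
      have hκ' : (1:ℝ) - κ ≠ 0 := ne_of_gt h1κ
      field_simp
      ring
    rw [h2] at h1
    exact h1
  have P4 : Filter.Tendsto
      (fun x : ℝ => (Hf κ x - 1 - x ^ 2 / (2 * (1 - κ) ^ 2)) * (1 - κ) ^ 2 / x ^ 2)
      (nhdsWithin 0 (Set.Ioi 0)) (nhds 0) := by
    apply hfin.congr'
    filter_upwards [self_mem_nhdsWithin] with x hx
    have hx0 : (0:ℝ) < x := hx
    have hH : Hf κ x = Real.cosh (ψ x) := hHf x hx0.le
    have hch : Real.cosh (ψ x) = 2 * Real.sinh (ψ x / 2)^2 + 1 := by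
      have h1 := Real.cosh_two_mul (ψ x / 2)
      have h2 := Real.cosh_sq (ψ x / 2)
      have h3 : 2 * (ψ x / 2) = ψ x := by ring
      rw [h3] at h1
      nlinarith
    rw [hH, hch]
    have hx' : x ≠ 0 := ne_of_gt hx0
    have hκ' : (1:ℝ) - κ ≠ 0 := ne_of_gt h1κ
    field_simp
    ring
  -- Part 5: asymptotics at infinity
  have P5 : ∃ Cκ : ℝ, 0 < Cκ ∧ ∀ x : ℝ, 2 ≤ x →
      |Hf κ x - x - κ * Real.log x - κ ^ 2 * Real.log x / x| ≤ Cκ := by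
    refine ⟨10, by norm_num, fun x hx2 => ?_⟩
    have hx0 : (0:ℝ) < x := by linarith
    have hx1 : (1:ℝ) ≤ x := by linarith
    have hψx : 0 ≤ ψ x := hψnonneg x (by linarith)
    have hHx : Hf κ x = Real.cosh (ψ x) := hHf x (by linarith)
    obtain ⟨y, hycosh⟩ : ∃ y, Real.cosh (ψ x) = y := ⟨_, rfl⟩
    rw [hycosh] at hHx
    rw [hHx]
    have hy1 : (1:ℝ) ≤ y := hycosh ▸ Real.one_le_cosh _
    have hGy' : Real.sqrt (y^2 - 1) - κ * Real.log (y + Real.sqrt (y^2 - 1)) = x := by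
      have h := hGcosh _ hψx
      rw [hφψ, hycosh] at h
      exact h
    have hu0 : 0 ≤ Real.sqrt (y^2 - 1) := Real.sqrt_nonneg _
    have hu2 : Real.sqrt (y^2 - 1)^2 = y^2 - 1 := Real.sq_sqrt (by nlinarith)
    obtain ⟨u, huu⟩ : ∃ u, Real.sqrt (y^2 - 1) = u := ⟨_, rfl⟩
    rw [huu] at hGy' hu0 hu2
    set t := y + u with ht
    have huy : u ≤ y := by nlinarith
    have ht1 : 1 ≤ t := by rw [ht]; linarith
    have hlt0 : 0 ≤ Real.log t := Real.log_nonneg ht1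
    have hδ0 : 0 ≤ y - u := by linarith
    have hδt : (y - u) * t = 1 := by rw [ht]; nlinarith
    have hδ1 : y - u ≤ 1 := by nlinarith
    have hxu : x ≤ u := by nlinarith [hGy']
    have hut : u ≤ t := by rw [ht]; linarith
    have hxt : x ≤ t := le_trans hxu hut
    have hlx0 : 0 ≤ Real.log x := Real.log_nonneg hx1
    have hlogxt : Real.log x ≤ Real.log t := Real.log_le_log hx0 hxt
    have hyx' : y - x = (y - u) + κ * Real.log t := by linarith [hGy']
    have hty : t ≤ 2*y := by rw [ht]; linarith
    have hlogt_le : Real.log t ≤ Real.log 2 + Real.log y := by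
      calc Real.log t ≤ Real.log (2*y) := Real.log_le_log (by linarith) hty
      _ = Real.log 2 + Real.log y := Real.log_mul two_ne_zero (by linarith)
    have hlogy : Real.log y ≤ y/2 := log_le_half hy1
    have hlog2 : Real.log 2 ≤ 1 := by
      nlinarith [Real.log_le_sub_one_of_pos (show (0:ℝ) < 2 by norm_num)]
    have hκlt : κ * Real.log t ≤ Real.log t := by nlinarith
    have hy4x : y ≤ 4*x := by linarith
    have ht8x : t ≤ 8*x := by linarith
    have hlogt8 : Real.log t ≤ Real.log x + 7 := by
      calc Real.log t ≤ Real.log (8*x) := Real.log_le_log (by linarith) ht8x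
      _ = Real.log 8 + Real.log x := Real.log_mul (by norm_num) (ne_of_gt hx0)
      _ ≤ Real.log x + 7 := by
          nlinarith [Real.log_le_sub_one_of_pos (show (0:ℝ) < 8 by norm_num)]
    have hlxx : Real.log x / x ≤ 1/2 := by
      rw [div_le_iff₀ hx0]
      linarith [log_le_half hx1]
    have hlxx0 : 0 ≤ Real.log x / x := div_nonneg hlx0 hx0.le
    have hrw : κ ^ 2 * Real.log x / x = κ^2 * (Real.log x / x) := by ring
    have h2' : 0 ≤ κ * Real.log t - κ * Real.log x := by nlinarith
    have h3' : κ * Real.log t - κ * Real.log x ≤ Real.log t - Real.log x := by nlinarith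
    have h5 : κ^2 * (Real.log x / x) ≤ Real.log x / x := by
      nlinarith [mul_nonneg (show (0:ℝ) ≤ 1 - κ^2 by nlinarith) hlxx0]
    have h4 : 0 ≤ κ^2 * (Real.log x / x) := by positivity
    rw [hrw, abs_le]
    constructor
    · linarith
    · linarith
  exact ⟨P1, P2, P3, P4, P5⟩
end
end

section
/- For all θ∈ℝ, a>0, ℓ>0, writing R = R(θ,a,ℓ), p = p(a,ℓ), κ = κ(a,ℓ): (i) R ≥ r₀(a,ℓ) = p(1−κ); (ii) R/p + κ ≈ ⟨R/p⟩; (iii) |R/p + κ − |θ|/p| ≲ ln⟨R/p⟩; (iv) |θ| ≲ R ≲ p + |θ|. -/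
noncomputable section

open Real MeasureTheory Set Filter

/-! ### Auxiliary lemmas for statement7 -/

private lemma aux_log_le (y : ℝ) (hy : 1 ≤ y) : Real.log y ≤ 2 * Real.sqrt y - 2 := by
  have h0 : (0:ℝ) ≤ y := by linarith
  have h1 : Real.log (Real.sqrt y) = Real.log y / 2 := Real.log_sqrt h0
  have h2 : Real.log (Real.sqrt y) ≤ Real.sqrt y - 1 :=
    Real.log_le_sub_one_of_pos (Real.sqrt_pos.mpr (by linarith))
  linarith [h1 ▸ h2]

private lemma aux_sqrt_half (y : ℝ) (hy : 1 ≤ y) : 2 * Real.sqrt y ≤ y / 2 + 2 := by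
  have h0 : (0:ℝ) ≤ y := by linarith
  have h1 : (Real.sqrt y) ^ 2 = y := Real.sq_sqrt h0
  nlinarith [sq_nonneg (Real.sqrt y - 2)]

private lemma aux_s_facts (y : ℝ) (hy : 1 ≤ y) :
    y - 1 ≤ Real.sqrt (y ^ 2 - 1) ∧ Real.sqrt (y ^ 2 - 1) ≤ y ∧
      (Real.sqrt (y ^ 2 - 1)) ^ 2 = y ^ 2 - 1 := by
  have h0 : (0:ℝ) ≤ y ^ 2 - 1 := by nlinarith
  have hsq : (Real.sqrt (y ^ 2 - 1)) ^ 2 = y ^ 2 - 1 := Real.sq_sqrt h0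
  refine ⟨?_, ?_, hsq⟩
  · have : (y - 1) ^ 2 ≤ y ^ 2 - 1 := by nlinarith
    calc y - 1 = Real.sqrt ((y-1)^2) := (Real.sqrt_sq (by linarith)).symm
      _ ≤ Real.sqrt (y ^ 2 - 1) := Real.sqrt_le_sqrt this
  · calc Real.sqrt (y ^ 2 - 1) ≤ Real.sqrt (y ^ 2) := Real.sqrt_le_sqrt (by linarith)
      _ = y := Real.sqrt_sq (by linarith)

/-- `G_κ(y) ≤ y - κ` for `y ≥ 1`, `0 ≤ κ ≤ 1`. -/
private lemma aux_Gf_le (κ y : ℝ) (hκ0 : 0 ≤ κ) (hκ1 : κ ≤ 1) (hy : 1 ≤ y) :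
    Gf κ y ≤ y - κ := by
  obtain ⟨hs1, hs2, hsq⟩ := aux_s_facts y hy
  set s := Real.sqrt (y ^ 2 - 1) with hs
  have hs0 : 0 ≤ s := Real.sqrt_nonneg _
  have hu1 : 1 ≤ y + s := by linarith
  have hu0 : 0 < y + s := by linarith
  set L := Real.log (y + s) with hL
  -- 1 - log u ≤ 1/u
  have hinv : Real.log (1 / (y + s)) ≤ 1 / (y + s) - 1 :=
    Real.log_le_sub_one_of_pos (by positivity)
  have hloginv : Real.log (1 / (y + s)) = -L := by
    rw [hL, one_div, Real.log_inv]
  have hkey : 1 - L ≤ 1 / (y + s) := by rw [hloginv] at hinv; linarith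
  -- (y - s)(y + s) = 1
  have hys : (y - s) * (y + s) = 1 := by nlinarith
  have hys' : y - s = 1 / (y + s) := by
    field_simp
    linarith [hys]
  show s - κ * L ≤ y - κ
  rcases le_or_gt L 1 with h | h
  · have h1 : κ * (1 - L) ≤ 1 * (1 - L) := by
      apply mul_le_mul_of_nonneg_right hκ1 (by linarith)
    have h2 : 1 - L ≤ y - s := by rw [hys']; exact hkey
    nlinarith
  · have h1 : κ * (1 - L) ≤ 0 := mul_nonpos_of_nonneg_of_nonpos hκ0 (by linarith)
    nlinarith

/-- `G_κ(y) ≥ y/2 - 4` for `y ≥ 1`, `0 ≤ κ ≤ 1`. -/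
private lemma aux_Gf_ge (κ y : ℝ) (hκ0 : 0 ≤ κ) (hκ1 : κ ≤ 1) (hy : 1 ≤ y) :
    y / 2 - 4 ≤ Gf κ y := by
  obtain ⟨hs1, hs2, hsq⟩ := aux_s_facts y hy
  set s := Real.sqrt (y ^ 2 - 1) with hs
  have hs0 : 0 ≤ s := Real.sqrt_nonneg _
  have hu1 : (1:ℝ) ≤ y + s := by linarith
  set L := Real.log (y + s) with hL
  have hL0 : 0 ≤ L := Real.log_nonneg hu1
  have hL2y : L ≤ Real.log (2 * y) := Real.log_le_log (by linarith) (by linarith)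
  have h2y : Real.log (2 * y) = Real.log 2 + Real.log y :=
    Real.log_mul (by norm_num) (by linarith)
  have hlogy : Real.log y ≤ y / 2 := by
    have := aux_log_le y hy
    have := aux_sqrt_half y hy
    linarith
  have hlog2 : Real.log 2 < 1 := by
    have := Real.log_two_lt_d9
    linarith
  have hκL : κ * L ≤ L := by nlinarith
  show y / 2 - 4 ≤ s - κ * L
  have : L ≤ 1 + y / 2 := by rw [h2y] at hL2y; linarith
  linarith

/-- `0 ≤ y - G_κ(y) ≤ 1 + log(2y)` for `y ≥ 1`, `0 ≤ κ ≤ 1`. -/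
private lemma aux_Gf_close (κ y : ℝ) (hκ0 : 0 ≤ κ) (hκ1 : κ ≤ 1) (hy : 1 ≤ y) :
    0 ≤ y - Gf κ y ∧ y - Gf κ y ≤ 1 + Real.log (2 * y) := by
  obtain ⟨hs1, hs2, hsq⟩ := aux_s_facts y hy
  set s := Real.sqrt (y ^ 2 - 1) with hs
  have hs0 : 0 ≤ s := Real.sqrt_nonneg _
  have hu1 : (1:ℝ) ≤ y + s := by linarith
  set L := Real.log (y + s) with hL
  have hL0 : 0 ≤ L := Real.log_nonneg hu1
  have hL2y : L ≤ Real.log (2 * y) := Real.log_le_log (by linarith) (by linarith)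
  have hys : (y - s) * (y + s) = 1 := by nlinarith
  have hys1 : y - s ≤ 1 := by nlinarith
  have hys0 : 0 ≤ y - s := by linarith
  have hκL : κ * L ≤ L := by nlinarith
  have hκL0 : 0 ≤ κ * L := by positivity
  constructor
  · show 0 ≤ y - (s - κ * L); linarith
  · show y - (s - κ * L) ≤ 1 + Real.log (2 * y); linarith

/-- Surjectivity of `G_κ : [1,∞) → [0,∞)`. -/
private lemma aux_Gf_surj (κ x : ℝ) (hκ0 : 0 ≤ κ) (hκ1 : κ ≤ 1) (hx : 0 ≤ x) :
    ∃ y ∈ Set.Ici (1:ℝ), Gf κ y = x := by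
  set Y : ℝ := 2 * x + 8 with hY
  have hY1 : (1:ℝ) ≤ Y := by linarith
  have hsc : Continuous fun y : ℝ => Real.sqrt (y ^ 2 - 1) := by
    exact Real.continuous_sqrt.comp (by continuity)
  have hcont : ContinuousOn (Gf κ) (Set.Icc 1 Y) := by
    unfold Gf
    apply ContinuousOn.sub hsc.continuousOn
    apply ContinuousOn.mul continuousOn_const
    apply ContinuousOn.log (by fun_prop)
    intro y hy
    have := Real.sqrt_nonneg (y ^ 2 - 1)
    have := hy.1
    positivity
  have hG1 : Gf κ 1 = 0 := by
    unfold Gf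
    norm_num
  have hGY : x ≤ Gf κ Y := by
    have := aux_Gf_ge κ Y hκ0 hκ1 hY1
    simp only [hY] at this ⊢
    linarith
  have hmem : x ∈ Set.Icc (Gf κ 1) (Gf κ Y) := by
    rw [hG1]; exact ⟨hx, hGY⟩
  obtain ⟨c, hc, hGc⟩ := intermediate_value_Icc hY1 hcont hmem
  exact ⟨c, hc.1, hGc⟩

/-- Main abstract estimate. -/
private lemma aux_main (κ p θ y R : ℝ) (hκ0 : 0 < κ) (hκ1 : κ ≤ 1) (hp : 0 < p)
    (hy1 : 1 ≤ y) (hGy : Gf κ y = |θ| / p) (hR : R = p * y - p * κ) :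
    p * (1 - κ) ≤ R ∧
    (jb (R / p) ≤ 8 * (R / p + κ) ∧ R / p + κ ≤ 8 * jb (R / p)) ∧
    |R / p + κ - |θ| / p| ≤ 8 * Real.log (jb (R / p)) ∧
    |θ| ≤ 8 * R ∧ R ≤ 8 * (p + |θ|) := by
  have hz : R / p = y - κ := by rw [hR]; field_simp
  have hθ : |θ| = p * Gf κ y := by
    rw [hGy]; field_simp
  rw [hz, hθ]
  set w := y - κ with hw
  have hw0 : 0 ≤ w := by rw [hw]; linarith
  have hwy : w ≤ y := by rw [hw]; linarith
  have hjb : jb w = Real.sqrt (2 + w ^ 2) := rfl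
  have hjb0 : 0 ≤ jb w := Real.sqrt_nonneg _
  have hjbw : w ≤ jb w := by
    rw [hjb]
    calc w = Real.sqrt (w ^ 2) := (Real.sqrt_sq hw0).symm
      _ ≤ Real.sqrt (2 + w ^ 2) := Real.sqrt_le_sqrt (by linarith)
  have hjb2 : Real.sqrt 2 ≤ jb w := by
    rw [hjb]
    exact Real.sqrt_le_sqrt (by nlinarith)
  have hjb1 : 1 ≤ jb w := by
    have h1 : (1:ℝ) = Real.sqrt 1 := by simp
    rw [h1]
    exact le_trans (Real.sqrt_le_sqrt (by norm_num)) hjb2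
  have hyjb : y ≤ 2 * jb w := by
    have hy' : y = w + κ := by rw [hw]; ring
    linarith
  have hjby : jb w ≤ 2 * y := by
    rw [hjb]
    calc Real.sqrt (2 + w ^ 2) ≤ Real.sqrt ((2 * y) ^ 2) := by
          apply Real.sqrt_le_sqrt; nlinarith
      _ = 2 * y := Real.sqrt_sq (by linarith)
  have hGle : Gf κ y ≤ y - κ := aux_Gf_le κ y hκ0.le hκ1 hy1
  have hGge : y / 2 - 4 ≤ Gf κ y := aux_Gf_ge κ y hκ0.le hκ1 hy1
  have hG0 : 0 ≤ Gf κ y := by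
    have : |θ| / p = Gf κ y := hGy.symm
    have h0 : 0 ≤ |θ| / p := by positivity
    linarith [this ▸ h0]
  refine ⟨?_, ⟨?_, ?_⟩, ?_, ?_, ?_⟩
  · rw [hR]; nlinarith
  · have : w + κ = y := by rw [hw]; ring
    rw [this]; linarith
  · have : w + κ = y := by rw [hw]; ring
    rw [this]; linarith
  · -- |w + κ - |θ|/p| ≤ 8 log (jb w)
    have hwk : w + κ = y := by rw [hw]; ring
    have hθp : p * Gf κ y / p = Gf κ y := by field_simp
    rw [hwk, hθp]
    obtain ⟨hc0, hc1⟩ := aux_Gf_close κ y hκ0.le hκ1 hy1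
    have hlog2 : (0.6931471803:ℝ) < Real.log 2 := Real.log_two_gt_d9
    have hlogjb : Real.log 2 / 2 ≤ Real.log (jb w) := by
      have h := Real.log_le_log (Real.sqrt_pos.mpr (by norm_num)) hjb2
      rwa [Real.log_sqrt (by norm_num)] at h
    have hlog2y : Real.log (2 * y) ≤ 2 * Real.log 2 + Real.log (jb w) := by
      have h4 : (2:ℝ) * y ≤ 4 * jb w := by linarith
      have hml := Real.log_le_log (by linarith) h4
      have h4jb : Real.log (4 * jb w) = Real.log 4 + Real.log (jb w) :=
        Real.log_mul (by norm_num) (by linarith)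
      have hl4 : Real.log 4 = 2 * Real.log 2 := by
        rw [show (4:ℝ) = 2 ^ (2:ℕ) by norm_num, Real.log_pow]
        norm_num
      rw [h4jb, hl4] at hml
      linarith
    rw [abs_of_nonneg (by linarith)]
    linarith
  · rw [hR]; nlinarith
  · rw [hR]; nlinarith

/-- basic estimates for the radial function `R(θ,a,ℓ)` (constants depending
only on `m`). -/
theorem statement7 (m : ℝ) (hm : 0 < m) :
    ∃ C : ℝ, 0 < C ∧ ∀ θ a ℓ : ℝ, 0 < a → 0 < ℓ →
      (rZero m a ℓ ≤ Rf m θ a ℓ ∧ rZero m a ℓ = pfn m a ℓ * (1 - kpa m a ℓ)) ∧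
      (jb (Rf m θ a ℓ / pfn m a ℓ) ≤ C * (Rf m θ a ℓ / pfn m a ℓ + kpa m a ℓ) ∧
        Rf m θ a ℓ / pfn m a ℓ + kpa m a ℓ ≤ C * jb (Rf m θ a ℓ / pfn m a ℓ)) ∧
      |Rf m θ a ℓ / pfn m a ℓ + kpa m a ℓ - |θ| / pfn m a ℓ| ≤
        C * Real.log (jb (Rf m θ a ℓ / pfn m a ℓ)) ∧
      (|θ| ≤ C * Rf m θ a ℓ ∧ Rf m θ a ℓ ≤ C * (pfn m a ℓ + |θ|)) := by
  refine ⟨8, by norm_num, fun θ a ℓ ha hℓ => ?_⟩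
  have hm2 : (0:ℝ) < m ^ 2 := by positivity
  have harg : (1:ℝ) ≤ 1 + 4 * a ^ 2 * ℓ / m ^ 2 := by
    have h0 : 0 < 4 * a ^ 2 * ℓ / m ^ 2 := by positivity
    linarith
  have hκ0 : 0 < kpa m a ℓ := by
    unfold kpa
    have h0 : 0 < Real.sqrt (1 + 4 * a ^ 2 * ℓ / m ^ 2) := Real.sqrt_pos.mpr (by linarith)
    positivity
  have hκ1 : kpa m a ℓ ≤ 1 := by
    unfold kpa
    rw [div_le_one (Real.sqrt_pos.mpr (by linarith))]
    calc (1:ℝ) = Real.sqrt 1 := by simp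
      _ ≤ Real.sqrt (1 + 4 * a ^ 2 * ℓ / m ^ 2) := Real.sqrt_le_sqrt harg
  have hp : 0 < pfn m a ℓ := by
    unfold pfn
    positivity
  have hx : 0 ≤ |θ| / pfn m a ℓ := by positivity
  obtain ⟨y₀, hy₀1, hGy₀⟩ := aux_Gf_surj (kpa m a ℓ) (|θ| / pfn m a ℓ) hκ0.le hκ1 hx
  have hex : ∃ b ∈ Set.Ici (1:ℝ), Gf (kpa m a ℓ) b = |θ| / pfn m a ℓ := ⟨y₀, hy₀1, hGy₀⟩
  have hy1 : 1 ≤ Hf (kpa m a ℓ) (|θ| / pfn m a ℓ) := Function.invFunOn_mem hex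
  have hGy : Gf (kpa m a ℓ) (Hf (kpa m a ℓ) (|θ| / pfn m a ℓ)) = |θ| / pfn m a ℓ :=
    Function.invFunOn_eq hex
  have hR : Rf m θ a ℓ =
      pfn m a ℓ * Hf (kpa m a ℓ) (|θ| / pfn m a ℓ) - pfn m a ℓ * kpa m a ℓ := rfl
  obtain ⟨h1, ⟨h2, h3⟩, h4, h5, h6⟩ :=
    aux_main (kpa m a ℓ) (pfn m a ℓ) θ (Hf (kpa m a ℓ) (|θ| / pfn m a ℓ)) (Rf m θ a ℓ)
      hκ0 hκ1 hp hy1 hGy hR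
  exact ⟨⟨h1, rfl⟩, ⟨h2, h3⟩, h4, h5, h6⟩
end
end
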